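/- arXiv:2604.08818 — 7 statements merged into one kernel-verified Lean document; each statement's English description precedes it below -/
import Mathlib

section
/- Let γ be a complex algebraic number of degree m over ℚ whose Galois group (of the Galois closure of ℚ(γ)/ℚ) is the full symmetric group S_m, and let γ₁, …, γ_m be the conjugates of γ. Then the m(m−1) differences γ_j − γ_k for j ≠ k are pairwise distinct. -/
open Polynomial

/-- If `γ` is algebraic of degree `m ≥ 2` over `ℚ` and the Galois group of its
minimal polynomial, acting on the roots, is the full symmetric group, then the
`m(m-1)` differences `γⱼ - γₖ` (`j ≠ k`) of conjugates of `γ` are pairwise distinct. -/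
theorem distinct_differences_of_conjugates (γ : ℂ) (hγ : IsAlgebraic ℚ γ)
    (m : ℕ) (hdeg : (minpoly ℚ γ).natDegree = m) (hm : 2 ≤ m)
    [Fact (((minpoly ℚ γ).map (algebraMap ℚ ℂ)).Splits)]
    (hGal : Function.Bijective (Polynomial.Gal.galActionHom (minpoly ℚ γ) ℂ)) :
    ∀ a ∈ (minpoly ℚ γ).rootSet ℂ, ∀ b ∈ (minpoly ℚ γ).rootSet ℂ,
      ∀ c ∈ (minpoly ℚ γ).rootSet ℂ, ∀ d ∈ (minpoly ℚ γ).rootSet ℂ,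
        a ≠ b → c ≠ d → a - b = c - d → a = c ∧ b = d := by
  classical
  intro a ha b hb c hc d hd hab hcd heq
  set p := minpoly ℚ γ with hp
  have hinj : Function.Injective (algebraMap p.SplittingField ℂ) :=
    (algebraMap p.SplittingField ℂ).injective
  set e := Gal.rootsEquivRoots p ℂ with he
  have hcoe : ∀ u : p.rootSet ℂ,
      algebraMap p.SplittingField ℂ ↑(e.symm u) = (u : ℂ) := by
    intro u
    have h1 : ((e (e.symm u) : p.rootSet ℂ) : ℂ) = (u : ℂ) := by
      rw [Equiv.apply_symm_apply]
    exact h1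
  -- It suffices to prove `a = c`.
  suffices hac : a = c by
    refine ⟨hac, ?_⟩
    linear_combination -heq + hac
  by_contra hac
  have hbd : b ≠ d := fun h => hac (by linear_combination heq + h)
  set A : p.rootSet ℂ := ⟨a, ha⟩ with hA
  set B : p.rootSet ℂ := ⟨b, hb⟩ with hB
  set C : p.rootSet ℂ := ⟨c, hc⟩ with hC
  set D : p.rootSet ℂ := ⟨d, hd⟩ with hD
  obtain ⟨σ, hσ⟩ := hGal.2 (Equiv.swap A B)
  have key : ∀ u : p.rootSet ℂ,
      ((Equiv.swap A B u : p.rootSet ℂ) : ℂ)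
        = algebraMap p.SplittingField ℂ (σ ↑(e.symm u)) := by
    intro u
    rw [← hσ]
    rfl
  -- pull the relation back to the splitting field
  have hrel : (↑(e.symm A) : p.SplittingField) - ↑(e.symm B)
      = ↑(e.symm C) - ↑(e.symm D) := by
    apply hinj
    rw [map_sub, map_sub, hcoe, hcoe, hcoe, hcoe]
    exact heq
  have hrel2 : ((Equiv.swap A B A : p.rootSet ℂ) : ℂ)
      - ((Equiv.swap A B B : p.rootSet ℂ) : ℂ)
      = ((Equiv.swap A B C : p.rootSet ℂ) : ℂ)
        - ((Equiv.swap A B D : p.rootSet ℂ) : ℂ) := by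
    rw [key A, key B, key C, key D, ← map_sub, ← map_sub σ, hrel, map_sub, map_sub]
  rw [Equiv.swap_apply_left, Equiv.swap_apply_right] at hrel2
  have hCA : C ≠ A := fun h => hac (congrArg Subtype.val h).symm
  have hDB : D ≠ B := fun h => hbd (congrArg Subtype.val h).symm
  by_cases h1 : C = B
  · have hc' : c = b := congrArg Subtype.val h1
    rw [h1, Equiv.swap_apply_right] at hrel2
    by_cases h2 : D = A
    · have hd' : d = a := congrArg Subtype.val h2
      exact hab (by linear_combination (heq + hc' - hd') / 2)
    · rw [Equiv.swap_apply_of_ne_of_ne h2 hDB] at hrel2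
      -- hrel2 : b - a = a - d, heq : a - b = c - d = b - d
      exact hab (by linear_combination (heq - hrel2 + hc') / 3)
  · rw [Equiv.swap_apply_of_ne_of_ne hCA h1] at hrel2
    by_cases h2 : D = A
    · have hd' : d = a := congrArg Subtype.val h2
      rw [h2, Equiv.swap_apply_left] at hrel2
      -- hrel2 : b - a = c - b, heq : a - b = c - a
      exact hab (by linear_combination (heq - hrel2 - hd') / 3)
    · rw [Equiv.swap_apply_of_ne_of_ne h2 hDB] at hrel2
      -- hrel2 : b - a = c - d, heq : a - b = c - d
      exact hab (by linear_combination (heq - hrel2) / 2)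
end

section
/- Let γ be a complex algebraic number of degree m over ℚ with Galois group S_m, and let γ' ≠ γ be a conjugate of γ. Then γ − γ' is algebraic of degree exactly m(m−1) over ℚ. -/
open Polynomial

section Aux

variable {F : Type*} [Field F] (p : F[X]) {E : Type*} [Field E] [Algebra F E]

theorem exists_gal_of_perm [Fact ((p.map (algebraMap F E)).Splits)]
    (hGal : Function.Surjective (Polynomial.Gal.galActionHom p E))
    (π : Equiv.Perm (p.rootSet p.SplittingField)) :
    ∃ σ : p.Gal, ∀ r : p.rootSet p.SplittingField,
      σ (r : p.SplittingField) = ((π r : p.SplittingField)) := by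
  obtain ⟨σ, hσ⟩ := hGal (Equiv.permCongr (Polynomial.Gal.rootsEquivRoots p E) π)
  refine ⟨σ, fun r => ?_⟩
  have h1 : Polynomial.Gal.galActionHom p E σ (Polynomial.Gal.rootsEquivRoots p E r)
      = Polynomial.Gal.rootsEquivRoots p E (π r) := by
    rw [hσ]
    simp [Equiv.permCongr_apply]
  have h2 : (Polynomial.Gal.galActionHom p E σ) (Polynomial.Gal.rootsEquivRoots p E r)
      = Polynomial.Gal.rootsEquivRoots p E (σ • r) := by
    have : Polynomial.Gal.galActionHom p E σ (Polynomial.Gal.rootsEquivRoots p E r)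
        = σ • (Polynomial.Gal.rootsEquivRoots p E r) := rfl
    rw [this, Polynomial.Gal.smul_def, Equiv.symm_apply_apply]
  have h3 : σ • r = π r := (Polynomial.Gal.rootsEquivRoots p E).injective (h2.symm.trans h1)
  exact congrArg Subtype.val h3

theorem diff_pairs_injective {K : Type*} [Field K] [CharZero K] {R : Type*} [DecidableEq R]
    (v : R → K) (hv : Function.Injective v)
    (hswap : ∀ u w : R, ∃ σ : K →+* K, ∀ r : R, σ (v r) = v (Equiv.swap u w r))
    {a b c d : R} (hab : a ≠ b) (hcd : c ≠ d) (h : v a - v b = v c - v d) :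
    a = c ∧ b = d := by
  suffices hbd : b = d by
    subst hbd
    exact ⟨hv (sub_left_inj.mp h), rfl⟩
  by_contra hbd
  have hac : a ≠ c := by
    rintro rfl
    exact hbd (hv (sub_right_inj.mp h))
  by_cases had : a = d
  · subst had
    by_cases hbc : b = c
    · subst hbc
      have h2 : (2 : K) * v a = 2 * v b := by linear_combination h
      exact hab (hv (mul_left_cancel₀ two_ne_zero h2))
    · obtain ⟨σ, hσ⟩ := hswap a b
      have e2 : v b - v a = v c - v b := by
        have := congrArg σ h
        rw [map_sub, map_sub, hσ a, hσ b, hσ c] at this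
        rwa [Equiv.swap_apply_left, Equiv.swap_apply_right,
          Equiv.swap_apply_of_ne_of_ne (Ne.symm hac) (Ne.symm hbc)] at this
      have h3 : (3 : K) * v a = 3 * v b := by linear_combination h - e2
      exact hab (hv (mul_left_cancel₀ three_ne_zero h3))
  · by_cases hbc : b = c
    · subst hbc
      obtain ⟨σ, hσ⟩ := hswap a b
      have e2 : v b - v a = v a - v d := by
        have := congrArg σ h
        rw [map_sub, map_sub, hσ a, hσ b, hσ d] at this
        rwa [Equiv.swap_apply_left, Equiv.swap_apply_right,
          Equiv.swap_apply_of_ne_of_ne (Ne.symm had) (Ne.symm hbd)] at this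
      have h3 : (3 : K) * v a = 3 * v d := by linear_combination -h - 2 * e2
      exact had (hv (mul_left_cancel₀ three_ne_zero h3))
    · obtain ⟨σ, hσ⟩ := hswap a c
      have e2 : v c - v b = v a - v d := by
        have := congrArg σ h
        rw [map_sub, map_sub, hσ a, hσ b, hσ c, hσ d] at this
        rwa [Equiv.swap_apply_left, Equiv.swap_apply_right,
          Equiv.swap_apply_of_ne_of_ne (Ne.symm hab) hbc,
          Equiv.swap_apply_of_ne_of_ne (Ne.symm had) (Ne.symm hcd)] at this
      have h2 : (2 : K) * v a = 2 * v c := by linear_combination h - e2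
      exact hac (hv (mul_left_cancel₀ two_ne_zero h2))

end Aux

/-- If `γ` is algebraic of degree `m` over `ℚ` with Galois group (of its minimal
polynomial, acting on the roots) the full symmetric group, and `γ' ≠ γ` is a
conjugate of `γ`, then `γ - γ'` has degree exactly `m(m-1)` over `ℚ`. -/
theorem degree_diff_of_conjugates (γ : ℂ) (hγ : IsAlgebraic ℚ γ)
    (m : ℕ) (hdeg : (minpoly ℚ γ).natDegree = m)
    [Fact ((minpoly ℚ γ).map (algebraMap ℚ ℂ)).Splits]
    (hGal : Function.Bijective (Polynomial.Gal.galActionHom (minpoly ℚ γ) ℂ))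
    (γ' : ℂ) (hγ' : γ' ∈ (minpoly ℚ γ).rootSet ℂ) (hne : γ' ≠ γ) :
    (minpoly ℚ (γ - γ')).natDegree = m * (m - 1) := by
  classical
  have hint : IsIntegral ℚ γ := hγ.isIntegral
  set p := minpoly ℚ γ with hp
  letI : Algebra ℚ p.SplittingField := Polynomial.SplittingField.instAlgebra p
  have hirr : Irreducible p := minpoly.irreducible hint
  have psep : p.Separable := hirr.separable
  have hγmem : γ ∈ p.rootSet ℂ := by
    rw [mem_rootSet]
    exact ⟨minpoly.ne_zero hint, minpoly.aeval ℚ γ⟩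
  haveI : CharZero p.SplittingField :=
    charZero_of_injective_algebraMap (algebraMap ℚ p.SplittingField).injective
  set e := Polynomial.Gal.rootsEquivRoots p ℂ with he
  set A := e.symm ⟨γ, hγmem⟩ with hA
  set B := e.symm ⟨γ', hγ'⟩ with hB
  have hcoe : ∀ r : (p.rootSet p.SplittingField), ((e r : p.rootSet ℂ) : ℂ)
      = algebraMap p.SplittingField ℂ (r : p.SplittingField) := fun r => rfl
  have heA : ((e A : p.rootSet ℂ) : ℂ) = γ := by rw [hA, Equiv.apply_symm_apply]
  have heB : ((e B : p.rootSet ℂ) : ℂ) = γ' := by rw [hB, Equiv.apply_symm_apply]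
  have hAB : A ≠ B := by
    intro hh
    apply hne
    rw [← heA, ← heB, hh]
  set z := (A : p.SplittingField) - (B : p.SplittingField) with hz
  have hzmap : algebraMap p.SplittingField ℂ z = γ - γ' := by
    rw [hz, map_sub, ← hcoe A, ← hcoe B, heA, heB]
  have hmin : minpoly ℚ (γ - γ') = minpoly ℚ z := by
    rw [← hzmap]
    exact minpoly.algHom_eq (IsScalarTower.toAlgHom ℚ p.SplittingField ℂ)
      (algebraMap p.SplittingField ℂ).injective z
  -- realize any permutation of the roots by a Galois automorphism
  have hperm : ∀ π : Equiv.Perm (p.rootSet p.SplittingField), ∃ σ : p.Gal,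
      ∀ r : (p.rootSet p.SplittingField), σ (r : p.SplittingField) = ((π r : p.SplittingField)) :=
    exists_gal_of_perm p hGal.2
  have hz_int : IsIntegral ℚ z := IsIntegral.of_finite ℚ z
  have qsep : (minpoly ℚ z).Separable := (minpoly.irreducible hz_int).separable
  have qsplits : ((minpoly ℚ z).map (algebraMap ℚ p.SplittingField)).Splits :=
    Normal.splits inferInstance z
  -- the map from ordered pairs of distinct roots to roots of `minpoly ℚ z`
  have hmem : ∀ q : {q : (p.rootSet p.SplittingField) × (p.rootSet p.SplittingField) // q.1 ≠ q.2},
      ((q.1.1 : p.SplittingField) - (q.1.2 : p.SplittingField))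
        ∈ (minpoly ℚ z).rootSet p.SplittingField := by
    rintro ⟨⟨c, d⟩, hcd⟩
    set b' := Equiv.swap A c B with hb'
    have hcb' : c ≠ b' := by
      intro hcc
      apply hAB
      have : Equiv.swap A c A = Equiv.swap A c B := by
        rw [Equiv.swap_apply_left, ← hb', ← hcc]
      exact (Equiv.swap A c).injective this
    obtain ⟨σ, hσ⟩ := hperm ((Equiv.swap A c).trans (Equiv.swap b' d))
    have hσA : σ (A : p.SplittingField) = (c : p.SplittingField) := by
      rw [hσ A]
      simp only [Equiv.trans_apply, Equiv.swap_apply_left]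
      rw [Equiv.swap_apply_of_ne_of_ne hcb' hcd]
    have hσB : σ (B : p.SplittingField) = (d : p.SplittingField) := by
      rw [hσ B]
      simp only [Equiv.trans_apply, ← hb', Equiv.swap_apply_left]
    have hσz : σ z = (c : p.SplittingField) - (d : p.SplittingField) := by
      rw [hz, map_sub, hσA, hσB]
    rw [mem_rootSet]
    refine ⟨minpoly.ne_zero hz_int, ?_⟩
    rw [← hσz, ← minpoly.algEquiv_eq (σ : p.SplittingField ≃ₐ[ℚ] p.SplittingField) z]
    exact minpoly.aeval ℚ _
  set Φ : {q : (p.rootSet p.SplittingField) × (p.rootSet p.SplittingField) // q.1 ≠ q.2} → ((minpoly ℚ z).rootSet p.SplittingField) :=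
    fun q => ⟨(q.1.1 : p.SplittingField) - (q.1.2 : p.SplittingField), hmem q⟩ with hΦ
  have hswap : ∀ u w : (p.rootSet p.SplittingField), ∃ σ : p.SplittingField →+* p.SplittingField,
      ∀ r : (p.rootSet p.SplittingField), σ (r : p.SplittingField) = ((Equiv.swap u w r : p.SplittingField)) := by
    intro u w
    obtain ⟨σ, hσ⟩ := hperm (Equiv.swap u w)
    exact ⟨RingHomClass.toRingHom (σ : p.SplittingField ≃ₐ[ℚ] p.SplittingField), hσ⟩
  have hΦinj : Function.Injective Φ := by
    rintro ⟨⟨a1, b1⟩, h1⟩ ⟨⟨a2, b2⟩, h2⟩ hh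
    have hh' : (a1 : p.SplittingField) - b1 = (a2 : p.SplittingField) - b2 :=
      congrArg Subtype.val hh
    obtain ⟨hac, hbd⟩ := diff_pairs_injective (Subtype.val : (p.rootSet p.SplittingField) → p.SplittingField)
      Subtype.coe_injective hswap h1 h2 hh'
    exact Subtype.ext (Prod.ext hac hbd)
  have hΦsurj : Function.Surjective Φ := by
    rintro ⟨w, hw⟩
    have hw' : aeval w (minpoly ℚ z) = 0 := (mem_rootSet.mp hw).2
    have hconj : IsConjRoot ℚ w z := (isConjRoot_of_aeval_eq_zero hz_int hw').symm
    obtain ⟨σ, hσ⟩ := hconj.exists_algEquiv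
    set cA : (p.rootSet p.SplittingField) := ⟨σ (A : p.SplittingField), rootSet_mapsTo σ.toAlgHom A.2⟩ with hcA
    set cB : (p.rootSet p.SplittingField) := ⟨σ (B : p.SplittingField), rootSet_mapsTo σ.toAlgHom B.2⟩ with hcB
    have hcne : cA ≠ cB := by
      intro hh
      apply hAB
      apply Subtype.ext
      exact σ.injective (congrArg Subtype.val hh)
    refine ⟨⟨(cA, cB), hcne⟩, ?_⟩
    apply Subtype.ext
    show (cA : p.SplittingField) - (cB : p.SplittingField) = w
    rw [hcA, hcB]
    show σ (A : p.SplittingField) - σ (B : p.SplittingField) = w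
    rw [← map_sub, ← hz, hσ]
  -- counting
  have hcardS : Fintype.card (p.rootSet p.SplittingField) = m := by
    rw [card_rootSet_eq_natDegree psep (SplittingField.splits p)]
    exact hdeg
  have hdiag : Fintype.card {q : (p.rootSet p.SplittingField) × (p.rootSet p.SplittingField) // q.1 = q.2} = Fintype.card (p.rootSet p.SplittingField) :=
    Fintype.card_congr
      ⟨fun q => q.1.1, fun s => ⟨(s, s), rfl⟩,
        fun q => by
          obtain ⟨⟨x, y⟩, h⟩ := q
          cases h
          rfl,
        fun s => rfl⟩
  have hcardD : Fintype.card {q : (p.rootSet p.SplittingField) × (p.rootSet p.SplittingField) // q.1 ≠ q.2} = m * m - m := by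
    have := Fintype.card_subtype_compl (fun q : (p.rootSet p.SplittingField) × (p.rootSet p.SplittingField) => q.1 = q.2)
    rw [this, hdiag, Fintype.card_prod, hcardS]
  have hfinal : Fintype.card ((minpoly ℚ z).rootSet p.SplittingField) = m * m - m := by
    rw [← Fintype.card_of_bijective ⟨hΦinj, hΦsurj⟩, hcardD]
  rw [hmin, ← card_rootSet_eq_natDegree qsep qsplits, hfinal, Nat.mul_sub, Nat.mul_one]
end

section
/- Let γ be a complex algebraic number of degree m over ℚ with Galois group S_m, and let γ' ≠ γ be a conjugate of γ. Then for any algebraic numbers β, β' each of degree strictly smaller than m over ℚ, we have γ − γ' ≠ β − β'. -/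
open Polynomial IntermediateField

lemma exists_perm_pair {α : Type*} [DecidableEq α] {a b c d : α} (hab : a ≠ b) (hcd : c ≠ d) :
    ∃ π : Equiv.Perm α, π a = c ∧ π b = d := by
  refine ⟨(Equiv.swap ((Equiv.swap a c) b) d) * (Equiv.swap a c), ?_, ?_⟩
  · have h1 : (Equiv.swap a c) a = c := Equiv.swap_apply_left a c
    have h2 : (Equiv.swap a c) b ≠ c := by
      exact fun h => hab ((Equiv.swap a c).injective (h.trans h1.symm)).symm
    simp only [Equiv.Perm.mul_apply, h1]
    exact Equiv.swap_apply_of_ne_of_ne h2.symm hcd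
  · simp only [Equiv.Perm.mul_apply]
    exact Equiv.swap_apply_left _ d

/-- If `γ` is algebraic of degree `m` over `ℚ` with Galois group the full symmetric
group, `γ' ≠ γ` is a conjugate of `γ`, and `β, β'` are algebraic of degree `< m`,
then `γ - γ' ≠ β - β'`. -/
theorem diff_conjugates_ne_diff_small_degree (γ : ℂ) (hγ : IsAlgebraic ℚ γ)
    (m : ℕ) (hdeg : (minpoly ℚ γ).natDegree = m)
    [Fact (((minpoly ℚ γ).map (algebraMap ℚ ℂ)).Splits)]
    (hGal : Function.Bijective (Polynomial.Gal.galActionHom (minpoly ℚ γ) ℂ))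
    (γ' : ℂ) (hγ' : γ' ∈ (minpoly ℚ γ).rootSet ℂ) (hne : γ' ≠ γ)
    (β β' : ℂ) (hβ : IsAlgebraic ℚ β) (hβ' : IsAlgebraic ℚ β')
    (hdβ : (minpoly ℚ β).natDegree < m) (hdβ' : (minpoly ℚ β').natDegree < m) :
    γ - γ' ≠ β - β' := by
  intro hcontra
  set p := minpoly ℚ γ with hp
  have hint : IsIntegral ℚ γ := hγ.isIntegral
  have hγalg' : IsAlgebraic ℚ γ' := ⟨p, minpoly.ne_zero hint, (mem_rootSet.mp hγ').2⟩
  have hδint : IsIntegral ℚ (γ - γ') := hint.sub hγalg'.isIntegral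
  set P := minpoly ℚ (γ - γ') with hP
  have hγroot : γ ∈ p.rootSet ℂ := by
    rw [mem_rootSet]; exact ⟨minpoly.ne_zero hint, minpoly.aeval ℚ γ⟩
  set f := IsScalarTower.toAlgHom ℚ p.SplittingField ℂ with hf
  have hfinj : Function.Injective f := f.toRingHom.injective
  set e := Polynomial.Gal.rootsEquivRoots p ℂ with he
  have key0 : ∀ y : p.rootSet p.SplittingField, ((e y : ℂ)) = f y := fun y => rfl
  have key1 : ∀ x : p.rootSet ℂ, f ((e.symm x : p.SplittingField)) = x := by
    intro x; have := key0 (e.symm x); rw [e.apply_symm_apply] at this; exact this.symm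
  have key2 : ∀ (σ : p.Gal) (x : p.rootSet ℂ),
      ((σ • x : p.rootSet ℂ) : ℂ) = f (σ.toAlgHom ((e.symm x : p.SplittingField))) := by
    intro σ x; rw [Polynomial.Gal.smul_def]; exact key0 _
  -- realize any permutation of roots by a Galois element
  have hreal : ∀ π : Equiv.Perm (p.rootSet ℂ), ∃ σ : p.Gal, ∀ x, σ • x = π x := by
    intro π
    obtain ⟨σ, hσ⟩ := hGal.2 π
    exact ⟨σ, fun x => by rw [← hσ]; rfl⟩
  -- transfer of difference equations
  have htrans : ∀ (σ : p.Gal) (x y z w : p.rootSet ℂ), (x : ℂ) - y = (z : ℂ) - w →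
      ((σ • x : p.rootSet ℂ) : ℂ) - ((σ • y : p.rootSet ℂ) : ℂ)
        = ((σ • z : p.rootSet ℂ) : ℂ) - ((σ • w : p.rootSet ℂ) : ℂ) := by
    intro σ x y z w h
    have hK : (e.symm x : p.SplittingField) - e.symm y
        = (e.symm z : p.SplittingField) - e.symm w := by
      apply hfinj
      rw [map_sub, map_sub, key1, key1, key1, key1]; exact h
    rw [key2, key2, key2, key2]
    simp only [← map_sub]
    rw [hK]
  -- every difference of distinct roots is a root of P
  have hroot : ∀ u v : p.rootSet ℂ, u ≠ v → aeval ((u : ℂ) - v) P = 0 := by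
    intro u v huv
    have hgg : (⟨γ, hγroot⟩ : p.rootSet ℂ) ≠ ⟨γ', hγ'⟩ := by
      intro h; exact hne (congrArg Subtype.val h).symm
    obtain ⟨π, hπ1, hπ2⟩ := exists_perm_pair hgg huv
    obtain ⟨σ, hσ⟩ := hreal π
    -- aeval in K
    have h0 : aeval ((e.symm ⟨γ, hγroot⟩ : p.SplittingField)
        - (e.symm ⟨γ', hγ'⟩ : p.SplittingField)) P = 0 := by
      apply hfinj
      rw [map_zero, ← Polynomial.aeval_algHom_apply, map_sub, key1, key1]
      exact minpoly.aeval ℚ (γ - γ')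
    have h1 : aeval (σ.toAlgHom ((e.symm ⟨γ, hγroot⟩ : p.SplittingField)
        - (e.symm ⟨γ', hγ'⟩ : p.SplittingField))) P = 0 := by
      rw [Polynomial.aeval_algHom_apply, h0, map_zero]
    have h2 : aeval (f (σ.toAlgHom ((e.symm ⟨γ, hγroot⟩ : p.SplittingField)
        - (e.symm ⟨γ', hγ'⟩ : p.SplittingField)))) P = 0 := by
      rw [Polynomial.aeval_algHom_apply, h1, map_zero]
    rw [map_sub, map_sub, ← key2, ← key2, hσ, hσ, hπ1, hπ2] at h2
    exact h2
  -- differences of distinct roots are pairwise distinct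
  have hdiffinj : ∀ u v u' v' : p.rootSet ℂ, u ≠ v → u' ≠ v' →
      (u : ℂ) - v = (u' : ℂ) - v' → u = u' ∧ v = v' := by
    intro u v u' v' huv hu'v' heq
    by_cases h1 : u = u'
    · subst h1
      exact ⟨rfl, Subtype.ext (by linear_combination -heq)⟩
    by_cases h2 : v = v'
    · subst h2
      exact ⟨Subtype.ext (by linear_combination heq), rfl⟩
    exfalso
    by_cases h3 : u = v'
    · subst h3
      by_cases h4 : v = u'
      · subst h4
        exact huv (Subtype.ext (by linear_combination heq / 2))
      · -- heq : u - v = u' - u, with u, v, u' pairwise distinct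
        obtain ⟨σ, hσ⟩ := hreal (Equiv.swap u v)
        have e2 := htrans σ u v u' u heq
        simp only [hσ] at e2
        rw [Equiv.swap_apply_left, Equiv.swap_apply_right,
          Equiv.swap_apply_of_ne_of_ne (fun h => h1 h.symm) (fun h => h4 h.symm)] at e2
        exact huv (Subtype.ext (by linear_combination (heq - e2) / 3))
    · by_cases h4 : v = u'
      · subst h4
        -- heq : u - v = v - v', with u, v, v' pairwise distinct
        obtain ⟨σ, hσ⟩ := hreal (Equiv.swap u v)
        have e2 := htrans σ u v v v' heq
        simp only [hσ] at e2
        rw [Equiv.swap_apply_left, Equiv.swap_apply_right,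
          Equiv.swap_apply_of_ne_of_ne (fun h => h3 h.symm) (fun h => h2 h.symm)] at e2
        exact huv (Subtype.ext (by linear_combination (heq - e2) / 3))
      · -- all four distinct
        obtain ⟨σ, hσ⟩ := hreal (Equiv.swap u' v')
        have e2 := htrans σ u v u' v' heq
        simp only [hσ] at e2
        rw [Equiv.swap_apply_left, Equiv.swap_apply_right,
          Equiv.swap_apply_of_ne_of_ne h1 h3, Equiv.swap_apply_of_ne_of_ne h4 h2] at e2
        exact hu'v' (Subtype.ext (by linear_combination (e2 - heq) / 2))
  -- count roots of P : lower bound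
  have hpsep : p.Separable := (minpoly.irreducible hint).separable
  have hcard : Fintype.card (p.rootSet ℂ) = m := by
    rw [← hdeg]; exact card_rootSet_eq_natDegree hpsep Fact.out
  classical
  set T : Finset ℂ := (p.rootSet ℂ).toFinset with hT
  have hTcard : T.card = m := by rw [hT, Set.toFinset_card, hcard]
  set V : Finset ℂ := T.offDiag.image (fun z => z.1 - z.2) with hV
  have hVcard : V.card = m * m - m := by
    rw [hV, Finset.card_image_of_injOn, Finset.offDiag_card, hTcard]
    intro z hz w hw hzw
    rw [Finset.mem_coe, Finset.mem_offDiag] at hz hw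
    have hz1 : z.1 ∈ p.rootSet ℂ := by simpa [hT] using hz.1
    have hz2 : z.2 ∈ p.rootSet ℂ := by simpa [hT] using hz.2.1
    have hw1 : w.1 ∈ p.rootSet ℂ := by simpa [hT] using hw.1
    have hw2 : w.2 ∈ p.rootSet ℂ := by simpa [hT] using hw.2.1
    have := hdiffinj ⟨z.1, hz1⟩ ⟨z.2, hz2⟩ ⟨w.1, hw1⟩ ⟨w.2, hw2⟩
      (fun h => hz.2.2 (congrArg Subtype.val h))
      (fun h => hw.2.2 (congrArg Subtype.val h)) hzw
    exact Prod.ext (congrArg Subtype.val this.1) (congrArg Subtype.val this.2)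
  have hPne : P ≠ 0 := minpoly.ne_zero hδint
  have hVsub : V ⊆ (P.map (algebraMap ℚ ℂ)).roots.toFinset := by
    intro x hx
    rw [hV, Finset.mem_image] at hx
    obtain ⟨z, hz, rfl⟩ := hx
    rw [Finset.mem_offDiag] at hz
    have hz1 : z.1 ∈ p.rootSet ℂ := by simpa [hT] using hz.1
    have hz2 : z.2 ∈ p.rootSet ℂ := by simpa [hT] using hz.2.1
    have := hroot ⟨z.1, hz1⟩ ⟨z.2, hz2⟩ (fun h => hz.2.2 (congrArg Subtype.val h))
    rw [Multiset.mem_toFinset,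
      mem_roots ((Polynomial.map_ne_zero_iff (algebraMap ℚ ℂ).injective).mpr hPne)]
    rwa [IsRoot.def, eval_map, ← aeval_def]
  have hlow : m * m - m ≤ P.natDegree := by
    calc m * m - m = V.card := hVcard.symm
      _ ≤ (P.map (algebraMap ℚ ℂ)).roots.toFinset.card := Finset.card_le_card hVsub
      _ ≤ Multiset.card (P.map (algebraMap ℚ ℂ)).roots := Multiset.toFinset_card_le _
      _ ≤ (P.map (algebraMap ℚ ℂ)).natDegree := Polynomial.card_roots' _
      _ = P.natDegree := natDegree_map _
  -- upper bound
  have hβint : IsIntegral ℚ β := hβ.isIntegral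
  have hβ'int : IsIntegral ℚ β' := hβ'.isIntegral
  haveI : FiniteDimensional ℚ ℚ⟮β⟯ := IntermediateField.adjoin.finiteDimensional hβint
  haveI : FiniteDimensional ℚ ℚ⟮β'⟯ := IntermediateField.adjoin.finiteDimensional hβ'int
  haveI : FiniteDimensional ℚ ↥(ℚ⟮β⟯ ⊔ ℚ⟮β'⟯) := IntermediateField.finiteDimensional_sup _ _
  have hmemβ : β ∈ ℚ⟮β⟯ ⊔ ℚ⟮β'⟯ :=
    le_sup_left (α := IntermediateField ℚ ℂ) (IntermediateField.mem_adjoin_simple_self ℚ β)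
  have hmemβ' : β' ∈ ℚ⟮β⟯ ⊔ ℚ⟮β'⟯ :=
    le_sup_right (α := IntermediateField ℚ ℂ) (IntermediateField.mem_adjoin_simple_self ℚ β')
  have hmemδ : β - β' ∈ ℚ⟮β⟯ ⊔ ℚ⟮β'⟯ := sub_mem hmemβ hmemβ'
  have hup : P.natDegree ≤ (minpoly ℚ β).natDegree * (minpoly ℚ β').natDegree := by
    have h1 : P = minpoly ℚ (⟨β - β', hmemδ⟩ : ↥(ℚ⟮β⟯ ⊔ ℚ⟮β'⟯)) := by
      rw [hP, hcontra]
      have := minpoly.algebraMap_eq (A := ℚ) (B := ↥(ℚ⟮β⟯ ⊔ ℚ⟮β'⟯)) (B' := ℂ)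
        (algebraMap ↥(ℚ⟮β⟯ ⊔ ℚ⟮β'⟯) ℂ).injective ⟨β - β', hmemδ⟩
      rw [show ((algebraMap ↥(ℚ⟮β⟯ ⊔ ℚ⟮β'⟯) ℂ) ⟨β - β', hmemδ⟩) = β - β' from rfl] at this
      exact this
    rw [h1]
    calc (minpoly ℚ (⟨β - β', hmemδ⟩ : ↥(ℚ⟮β⟯ ⊔ ℚ⟮β'⟯))).natDegree
        ≤ Module.finrank ℚ ↥(ℚ⟮β⟯ ⊔ ℚ⟮β'⟯) := minpoly.natDegree_le _
      _ ≤ Module.finrank ℚ ℚ⟮β⟯ * Module.finrank ℚ ℚ⟮β'⟯ :=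
          IntermediateField.finrank_sup_le _ _
      _ = (minpoly ℚ β).natDegree * (minpoly ℚ β').natDegree := by
          rw [IntermediateField.adjoin.finrank hβint, IntermediateField.adjoin.finrank hβ'int]
  -- arithmetic contradiction
  have hβpos : 0 < (minpoly ℚ β).natDegree := minpoly.natDegree_pos hβint
  have hfinal : m * m - m ≤ (m - 1) * (m - 1) :=
    hlow.trans (hup.trans (Nat.mul_le_mul (by omega) (by omega)))
  have hmm : m * m - m = m * (m - 1) := by
    cases m with
    | zero => rfl
    | succ n => rw [Nat.mul_succ, Nat.add_sub_cancel, Nat.succ_sub_one]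
  rw [hmm] at hfinal
  have := Nat.le_of_mul_le_mul_right hfinal (show 0 < m - 1 by omega)
  omega
end

section
/- Let K be a field, α ∈ K nonzero, and m a positive integer. Assume that α ∉ K^p for every prime p dividing m, and additionally that α ∉ −4·K^4 whenever 4 divides m. Then the polynomial X^m − α is irreducible in K[X]. -/
open Polynomial

section BinomialAux

open IntermediateField

universe u

/-- If `α` is not a square in `K` and `y⁴ = α` for some `y` in a quadratic extension `L/K`,
then `α ∈ -4K⁴`. -/
lemma binomial_aux_four {K L : Type*} [Field K] [Field L] [Algebra K L]
    (h2 : Module.finrank K L = 2) {α : K} (hsq : ∀ c : K, c ^ 2 ≠ α) {y : L}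
    (hy : y ^ 4 = algebraMap K L α) : ∃ c : K, -4 * c ^ 4 = α := by
  have hfd : FiniteDimensional K L := FiniteDimensional.of_finrank_pos (by omega)
  have φinj : Function.Injective (algebraMap K L) := (algebraMap K L).injective
  have hy2 : y ^ 2 ∉ (algebraMap K L).range := by
    rintro ⟨c, hc⟩
    refine hsq c (φinj ?_)
    rw [map_pow, hc, ← pow_mul, hy]
  have hyr : y ∉ (algebraMap K L).range := by
    rintro ⟨c, hc⟩
    exact hy2 ⟨c ^ 2, by rw [map_pow, hc]⟩
  have hint : IsIntegral K y := .of_finite K y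
  have hdvd : (minpoly K y).natDegree ∣ 2 := by
    have h := Module.finrank_mul_finrank K K⟮y⟯ L
    rw [IntermediateField.adjoin.finrank hint, h2] at h
    exact Dvd.intro _ h
  have hdeg : (minpoly K y).natDegree = 2 := by
    rcases (Nat.dvd_prime Nat.prime_two).mp hdvd with h1 | h1
    · exact absurd (minpoly.natDegree_eq_one_iff.mp h1) hyr
    · exact h1
  have hlc : (minpoly K y).coeff 2 = 1 := by
    rw [← hdeg]; exact (minpoly.monic hint).coeff_natDegree
  have h0 := minpoly.aeval K y
  rw [Polynomial.aeval_eq_sum_range, hdeg] at h0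
  simp only [Finset.sum_range_succ, Finset.sum_range_zero, zero_add, hlc, one_smul,
    Algebra.smul_def, map_one, pow_zero, mul_one, pow_one] at h0
  obtain ⟨A, hA⟩ : ∃ A : K, A = -(minpoly K y).coeff 1 := ⟨_, rfl⟩
  obtain ⟨B, hB⟩ : ∃ B : K, B = -(minpoly K y).coeff 0 := ⟨_, rfl⟩
  have hrel : y ^ 2 = algebraMap K L A * y + algebraMap K L B := by
    rw [hA, hB, map_neg, map_neg]
    linear_combination h0
  have key : algebraMap K L (A ^ 3 + 2 * A * B) * y
      = algebraMap K L (α - (A ^ 2 * B + B ^ 2)) := by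
    have e1 : algebraMap K L α = (algebraMap K L A * y + algebraMap K L B) ^ 2 := by
      rw [← hrel, ← hy]; ring
    simp only [map_add, map_mul, map_sub, map_pow, map_ofNat]
    linear_combination -e1 - (algebraMap K L A) ^ 2 * hrel
  have hAzero : A ^ 3 + 2 * A * B = 0 := by
    by_contra h
    apply hyr
    refine ⟨(α - (A ^ 2 * B + B ^ 2)) / (A ^ 3 + 2 * A * B), ?_⟩
    have ht : (algebraMap K L) (A ^ 3 + 2 * A * B) ≠ 0 := fun h' => h (φinj (by simpa using h'))
    rw [map_div₀, div_eq_iff ht, ← key]; ring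
  have hAne : A ≠ 0 := by
    intro h
    refine hy2 ⟨B, ?_⟩
    rw [hrel, h]; simp
  have hABrel : A ^ 2 + 2 * B = 0 := by
    have : A * (A ^ 2 + 2 * B) = 0 := by linear_combination hAzero
    rcases mul_eq_zero.mp this with h | h
    · exact absurd h hAne
    · exact h
  have h2K : (2 : K) ≠ 0 := by
    intro h
    apply hAne
    have : A ^ 2 = 0 := by linear_combination hABrel - B * h
    exact pow_eq_zero_iff (by norm_num) |>.mp this
  have hαeq : α = A ^ 2 * B + B ^ 2 := by
    have h' : algebraMap K L (α - (A ^ 2 * B + B ^ 2)) = 0 := by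
      rw [← key, hAzero, map_zero, zero_mul]
    exact sub_eq_zero.mp (φinj (by rw [h', map_zero]))
  refine ⟨A / 2, ?_⟩
  have hBval : B = -(A ^ 2) / 2 := by
    field_simp
    linear_combination hABrel
  rw [hαeq, hBval]
  field_simp
  ring

theorem binomial_irreducible_aux : ∀ (m : ℕ) (K : Type u) [Field K] (α : K), α ≠ 0 → 0 < m →
    (∀ p : ℕ, p.Prime → p ∣ m → ∀ b : K, b ^ p ≠ α) →
    (4 ∣ m → ∀ b : K, -4 * b ^ 4 ≠ α) → Irreducible (X ^ m - C α) := by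
  intro m
  induction m using Nat.strong_induction_on with
  | _ m IH =>
  intro K _ α hα hm hp h4
  rcases Nat.even_or_odd m with he | ho
  · obtain ⟨n, rfl⟩ := he.two_dvd
    have hn0 : 0 < n := by omega
    have hsq : ∀ c : K, c ^ 2 ≠ α := hp 2 Nat.prime_two ⟨n, rfl⟩
    have h2irr : Irreducible (X ^ 2 - C α) :=
      X_pow_sub_C_irreducible_of_prime Nat.prime_two hsq
    have main := X_pow_mul_sub_C_irreducible (n := n) h2irr ?_
    · rwa [mul_comm] at main
    intro E _ _ x hx
    have hint : IsIntegral K x := not_not.mp fun h ↦ by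
      simpa only [degree_zero, degree_X_pow_sub_C two_pos,
        WithBot.natCast_ne_bot] using congr_arg degree (hx.symm.trans (dif_neg h))
    have hfin : Module.finrank K K⟮x⟯ = 2 := by
      rw [IntermediateField.adjoin.finrank hint, hx, natDegree_X_pow_sub_C]
    have hgen2 : (AdjoinSimple.gen K x) ^ 2 = algebraMap K K⟮x⟯ α := by
      have h0 := IntermediateField.aeval_gen_minpoly K x
      rw [hx] at h0
      simpa [sub_eq_zero] using h0
    refine IH n (by omega) K⟮x⟯ (AdjoinSimple.gen K x) ?_ hn0 ?_ ?_
    · intro h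
      rw [h] at hgen2
      exact hα (by simpa using hgen2.symm)
    · intro q hq hqn b hb
      rcases eq_or_ne q 2 with rfl | hq2
      · have hc4 : b ^ 4 = algebraMap K K⟮x⟯ α := by
          rw [show (4:ℕ) = 2*2 from rfl, pow_mul, hb, hgen2]
        obtain ⟨d, hd⟩ := binomial_aux_four hfin hsq hc4
        exact h4 (by obtain ⟨k, rfl⟩ := hqn; exact ⟨k, by ring⟩) d hd
      · have hodd : Odd q := hq.odd_of_ne_two hq2
        have hnorm : Algebra.norm K (AdjoinSimple.gen K x) = -α := by
          rw [← IntermediateField.adjoin.powerBasis_gen hint,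
            Algebra.PowerBasis.norm_gen_eq_coeff_zero_minpoly]
          simp [IntermediateField.adjoin.powerBasis_gen, IntermediateField.minpoly_gen,
            IntermediateField.adjoin.powerBasis, hx, coeff_X_pow]
        refine hp q hq (hqn.mul_left 2) (- Algebra.norm K b) ?_
        rw [hodd.neg_pow, ← map_pow, hb, hnorm, neg_neg]
    · intro hn4 c hc
      have hc4 : (2 * c ^ 2) ^ 4 = algebraMap K K⟮x⟯ α := by
        rw [← hgen2, ← hc]; ring
      obtain ⟨d, hd⟩ := binomial_aux_four hfin hsq hc4
      exact h4 (Dvd.dvd.mul_left hn4 2) d hd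
  · exact X_pow_sub_C_irreducible_of_odd ho (fun p hq hqm => hp p hq hqm)

end BinomialAux

/-- Capelli–Vahlen irreducibility criterion for binomials: if `α ∈ K×` is not a
`p`-th power for any prime `p ∣ m`, and moreover `α ∉ -4K⁴` whenever `4 ∣ m`,
then `X^m - α` is irreducible over `K`. -/
theorem binomial_irreducible {K : Type*} [Field K] (α : K) (hα : α ≠ 0)
    (m : ℕ) (hm : 0 < m)
    (hp : ∀ p : ℕ, p.Prime → p ∣ m → ∀ b : K, b ^ p ≠ α)
    (h4 : 4 ∣ m → ∀ b : K, -4 * b ^ 4 ≠ α) :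
    Irreducible (X ^ m - C α) := by
  exact binomial_irreducible_aux m K α hα hm hp h4
end

section
/- Let I ⊂ ℝ be a non-empty open interval and f : I → ℝ a continuous function that is nowhere locally constant. Then there exist uncountably many Liouville numbers λ ∈ I such that f(λ) is also a Liouville number. -/
/-- If `f` is continuous and nowhere locally constant on a non-empty open interval
`(a, b)`, then there are uncountably many Liouville numbers `λ ∈ (a, b)` such that
`f(λ)` is a Liouville number as well. -/
theorem uncountably_many_liouville_with_liouville_image (a b : ℝ) (hab : a < b)
    (f : ℝ → ℝ) (hf : ContinuousOn f (Set.Ioo a b))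
    (hnc : ∀ c d : ℝ, a ≤ c → c < d → d ≤ b → ¬ ∃ k : ℝ, ∀ x ∈ Set.Ioo c d, f x = k) :
    ¬ Set.Countable {x : ℝ | x ∈ Set.Ioo a b ∧ Liouville x ∧ Liouville (f x)} := by
  intro hcount
  set T := {x : ℝ | x ∈ Set.Ioo a b ∧ Liouville x ∧ Liouville (f x)} with hT
  -- A countable family of dense open sets whose intersection consists of Liouville numbers
  obtain ⟨S, hSo, hSd, hSc, hSL⟩ :=
    mem_residual_iff.1 (eventually_residual_liouville : {x : ℝ | Liouville x} ∈ residual ℝ)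
  -- the modified sets
  set W : Set ℝ → Set ℝ := fun t => (t ∩ (Set.Ioo a b ∩ f ⁻¹' t)) ∪ (Set.Icc a b)ᶜ with hW
  have hWres : ∀ t ∈ S, W t ∈ residual ℝ := by
    intro t ht
    apply residual_of_dense_open
    · exact ((hSo t ht).inter (hf.isOpen_inter_preimage isOpen_Ioo (hSo t ht))).union
        isClosed_Icc.isOpen_compl
    · rw [dense_iff_inter_open]
      intro V hV hVne
      by_cases hVI : ∃ y ∈ V, y ∉ Set.Icc a b
      · obtain ⟨y, hyV, hy⟩ := hVI
        exact ⟨y, hyV, Or.inr hy⟩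
      push_neg at hVI
      obtain ⟨x, hxV⟩ := hVne
      have hxI : x ∈ Set.Icc a b := hVI x hxV
      obtain ⟨δ, hδ, hball⟩ := Metric.isOpen_iff.1 hV x hxV
      -- find a point of `V ∩ Ioo a b`
      have hne' : max a (x - δ) < min b (x + δ) := by
        rcases hxI with ⟨hax, hxb⟩
        simp only [max_lt_iff, lt_min_iff]
        constructor <;> constructor <;> linarith
      set p := (max a (x - δ) + min b (x + δ)) / 2 with hp
      have hpmem : p ∈ Set.Ioo (max a (x - δ)) (min b (x + δ)) := by
        constructor <;> simp only [hp] <;> linarith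
      have hpV : p ∈ V := by
        apply hball
        rw [Real.ball_eq_Ioo]
        rcases hpmem with ⟨h1, h2⟩
        exact ⟨lt_of_le_of_lt (le_max_right _ _) h1, lt_of_lt_of_le h2 (min_le_right _ _)⟩
      have hpab : p ∈ Set.Ioo a b := by
        rcases hpmem with ⟨h1, h2⟩
        exact ⟨lt_of_le_of_lt (le_max_left _ _) h1, lt_of_lt_of_le h2 (min_le_left _ _)⟩
      -- shrink to an interval `Ioo c d ⊆ V ∩ Ioo a b`
      obtain ⟨ε, hε, hball2⟩ := Metric.isOpen_iff.1 (hV.inter isOpen_Ioo) p ⟨hpV, hpab⟩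
      set c := p - ε with hc
      set d := p + ε with hd
      have hcd : c < d := by simp only [hc, hd]; linarith
      have hsubV : Set.Ioo c d ⊆ V ∩ Set.Ioo a b := by
        intro z hz
        apply hball2
        rw [Real.ball_eq_Ioo]
        exact hz
      have hsubab : Set.Ioo c d ⊆ Set.Ioo a b := fun z hz => (hsubV hz).2
      have hac : a ≤ c ∧ d ≤ b := (Set.Ioo_subset_Ioo_iff hcd).1 hsubab
      -- `f` is not constant on `Ioo c d`
      have hnck := hnc c d hac.1 hcd hac.2
      push_neg at hnck
      set m := (c + d) / 2 with hm
      have hmmem : m ∈ Set.Ioo c d := by constructor <;> simp only [hm] <;> linarith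
      obtain ⟨v, hvmem, hvne⟩ := hnck (f m)
      have huIcc : Set.uIcc v m ⊆ Set.Ioo c d :=
        (Set.ordConnected_Ioo).uIcc_subset hvmem hmmem
      have hivt := intermediate_value_uIcc (hf.mono (huIcc.trans hsubab))
      -- pick a point of `t` in the interval of intermediate values
      obtain ⟨y, hymem, hyt⟩ := dense_iff_inter_open.1 (hSd t ht)
        (Set.Ioo (f v ⊓ f m) (f v ⊔ f m)) isOpen_Ioo
        (Set.nonempty_Ioo.2 (inf_lt_sup.mpr hvne))
      have hyuIcc : y ∈ Set.uIcc (f v) (f m) := Set.Ioo_subset_Icc_self hymem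
      obtain ⟨w, hwmem, hfw⟩ := hivt hyuIcc
      have hwcd : w ∈ Set.Ioo c d := huIcc hwmem
      -- the open set of points in `Ioo c d` whose image lies in `t`
      have hPopen : IsOpen (Set.Ioo c d ∩ f ⁻¹' t) :=
        (hf.mono hsubab).isOpen_inter_preimage isOpen_Ioo (hSo t ht)
      have hPne : (Set.Ioo c d ∩ f ⁻¹' t).Nonempty := ⟨w, hwcd, by rw [Set.mem_preimage, hfw]; exact hyt⟩
      obtain ⟨z, hzP, hzt⟩ := dense_iff_inter_open.1 (hSd t ht) _ hPopen hPne
      refine ⟨z, (hsubV hzP.1).1, Or.inl ⟨hzt, hsubab hzP.1, hzP.2⟩⟩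
  -- the residual set
  have hRres : (⋂ t ∈ S, W t) ∈ residual ℝ := (countable_bInter_mem hSc).2 hWres
  -- the complement of the countable set `T` is residual
  have hTc : (Tᶜ : Set ℝ) ∈ residual ℝ := by
    have : (⋂ x ∈ T, ({x}ᶜ : Set ℝ)) ∈ residual ℝ :=
      (countable_bInter_mem hcount).2 fun x _ =>
        residual_of_dense_open isOpen_compl_singleton (dense_compl_singleton x)
    convert this using 1
    ext y
    simp only [Set.mem_compl_iff, Set.mem_iInter, Set.mem_singleton_iff]
    exact ⟨fun h i hi hyi => h (hyi ▸ hi), fun h hy => h y hy rfl⟩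
  have hdense : Dense ((⋂ t ∈ S, W t) ∩ Tᶜ) :=
    dense_of_mem_residual (Filter.inter_mem hRres hTc)
  obtain ⟨z, hzab, hzR, hzTc⟩ := dense_iff_inter_open.1 hdense (Set.Ioo a b) isOpen_Ioo
    (Set.nonempty_Ioo.2 hab)
  have hzmem : ∀ t ∈ S, z ∈ t ∧ f z ∈ t := by
    intro t ht
    have hzW := Set.mem_iInter₂.1 hzR t ht
    rcases hzW with h | h
    · exact ⟨h.1, h.2.2⟩
    · exact absurd (Set.Ioo_subset_Icc_self hzab) h
  exact hzTc ⟨hzab, hSL fun t ht => (hzmem t ht).1, hSL fun t ht => (hzmem t ht).2⟩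
end

section
/- Every real number λ admitting a sequence of rational approximations (α_n) and exponents (v_n) with H(α_n) → ∞, v_n → ∞, |λ − α_n| ≤ exp(−v_n H(α_n)), and H(α_{n+1}) ≤ A·v_n·H(α_n) for some constant A > 0 (i.e., every 𝓛-number) is a Liouville number. -/
open Filter

/-- The absolute logarithmic height of a rational number `p/q` in lowest terms:
`log max(|p|, q)`. -/
noncomputable def ratHeight (x : ℚ) : ℝ := Real.log (max x.num.natAbs x.den : ℕ)

/-- Every 𝓛-number is a Liouville number: if a real `λ` admits rational
approximations `α_n` with `H(α_n) → ∞`, `v_n → ∞`, `|λ - α_n| ≤ exp(-v_n H(α_n))`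
and `H(α_{n+1}) ≤ A v_n H(α_n)` for some `A > 0`, then `λ` is Liouville. -/
theorem liouville_of_L_number (lam : ℝ) (α : ℕ → ℚ) (v : ℕ → ℝ)
    (hv : ∀ n, 0 < v n)
    (hH : Tendsto (fun n => ratHeight (α n)) atTop atTop)
    (hvt : Tendsto v atTop atTop)
    (happ : ∀ n, |lam - (α n : ℝ)| ≤ Real.exp (-(v n) * ratHeight (α n)))
    (A : ℝ) (hA : 0 < A)
    (hgap : ∀ n, ratHeight (α (n + 1)) ≤ A * v n * ratHeight (α n)) :
    Liouville lam := by
  intro n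
  set C : ℝ := |lam| + 1 with hCdef
  have hC1 : (1:ℝ) ≤ C := by rw [hCdef]; have := abs_nonneg lam; linarith
  have hC0 : (0:ℝ) < C := lt_of_lt_of_le one_pos hC1
  have hH0 : ∀ m, 0 ≤ ratHeight (α m) := by
    intro m
    apply Real.log_nonneg
    have h1 : 1 ≤ (α m).den := (α m).pos
    have : (1:ℕ) ≤ max (α m).num.natAbs (α m).den := le_trans h1 (le_max_right _ _)
    exact_mod_cast this
  -- |α m| ≤ C for all m
  have habs : ∀ m, |(α m : ℝ)| ≤ C := by
    intro m
    have h1 : |lam - (α m : ℝ)| ≤ 1 := by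
      refine le_trans (happ m) ?_
      rw [Real.exp_le_one_iff]
      have := mul_nonneg (hv m).le (hH0 m)
      linarith
    have h3 := abs_sub_abs_le_abs_sub ((α m : ℝ)) lam
    rw [abs_sub_comm] at h3
    simp [hCdef]; linarith
  -- max(|num|, den) ≤ C * den
  have hMden : ∀ m, ((max (α m).num.natAbs (α m).den : ℕ) : ℝ) ≤ C * (α m).den := by
    intro m
    have hd : (0:ℝ) < (α m).den := by exact_mod_cast (α m).pos
    have h4 : |((α m).num : ℝ)| = |(α m : ℝ)| * (α m).den := by
      rw [Rat.cast_def, abs_div, abs_of_pos hd]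
      field_simp
    have h5 : ((α m).num.natAbs : ℝ) ≤ C * (α m).den := by
      rw [Nat.cast_natAbs, Int.cast_abs, h4]
      exact mul_le_mul_of_nonneg_right (habs m) hd.le
    have h6 : ((α m).den : ℝ) ≤ C * (α m).den := by nlinarith
    have := max_le h5 h6  -- wrong shape; do cast
    push_cast
    exact max_le h5 h6
  -- eventually den ≥ 2
  have hden2 : ∀ᶠ m in atTop, 2 < ((α m).den : ℝ) := by
    have h7 : ∀ᶠ m in atTop, Real.log (2 * C) < ratHeight (α m) :=
      hH.eventually_gt_atTop _
    filter_upwards [h7] with m hm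
    have hMpos : (0:ℝ) < ((max (α m).num.natAbs (α m).den : ℕ) : ℝ) := by
      have h1 : 1 ≤ (α m).den := (α m).pos
      have : (1:ℕ) ≤ max (α m).num.natAbs (α m).den := le_trans h1 (le_max_right _ _)
      have : (1:ℝ) ≤ ((max (α m).num.natAbs (α m).den : ℕ) : ℝ) := by exact_mod_cast this
      linarith
    have h8 : 2 * C < ((max (α m).num.natAbs (α m).den : ℕ) : ℝ) := by
      by_contra hcon
      push_neg at hcon
      have := Real.log_le_log (by positivity) hcon
      unfold ratHeight at hm
      linarith
    have := hMden m
    nlinarith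
  -- eventually α m ≠ lam
  have hne : ∀ᶠ m in atTop, (α m : ℝ) ≠ lam := by
    by_cases hq : ∃ q : ℚ, (q : ℝ) = lam
    · obtain ⟨q, hq⟩ := hq
      have h9 : ∀ᶠ m in atTop, ratHeight q < ratHeight (α m) := hH.eventually_gt_atTop _
      filter_upwards [h9] with m hm heq
      have : α m = q := by exact_mod_cast heq.trans hq.symm
      rw [this] at hm
      exact lt_irrefl _ hm
    · push_neg at hq
      exact Eventually.of_forall fun m => hq (α m)
  have hvn : ∀ᶠ m in atTop, (n : ℝ) < v m := hvt.eventually_gt_atTop _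
  obtain ⟨m, hm2, hmne, hmv⟩ := (hden2.and (hne.and hvn)).exists
  set d : ℕ := (α m).den with hd
  have hd1 : (1:ℝ) < (d:ℝ) := by linarith
  have hdpos : (0:ℝ) < (d:ℝ) := by linarith
  refine ⟨(α m).num, (d : ℤ), ?_, ?_, ?_⟩
  · exact_mod_cast hd1
  · intro hcon
    apply hmne
    rw [Rat.cast_def]
    push_cast at hcon ⊢
    rw [← hcon]
  · have hcast : (((α m).num : ℝ)) / ((d:ℤ):ℝ) = (α m : ℝ) := by
      rw [Rat.cast_def]; push_cast; ring
    rw [hcast]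
    have hlogd_pos : 0 < Real.log d := Real.log_pos hd1
    have hlogd_le : Real.log d ≤ ratHeight (α m) := by
      apply Real.log_le_log hdpos
      have : d ≤ max (α m).num.natAbs (α m).den := le_max_right _ _
      exact_mod_cast this
    have hkey : -(v m) * ratHeight (α m) < -(n:ℝ) * Real.log d := by
      nlinarith [hv m, hH0 m]
    calc |lam - (α m : ℝ)| ≤ Real.exp (-(v m) * ratHeight (α m)) := happ m
      _ < Real.exp (-(n:ℝ) * Real.log d) := Real.exp_lt_exp.mpr hkey
      _ = 1 / ((d:ℤ):ℝ) ^ n := by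
          rw [neg_mul, Real.exp_neg, Real.exp_nat_mul, Real.exp_log hdpos]
          push_cast
          ring
end

section
/- Let γ be a non-real complex algebraic number of degree m with Galois group S_m. Then there exists a constant C > 0 (depending only on γ) such that for every algebraic number β of degree strictly smaller than m, |(λ + γ) − β| ≥ exp(−C(H(β) + 1)) for every real number λ. -/
open Polynomial Filter Topology

/-- The absolute logarithmic Weil height of an algebraic number `x : ℂ`,
defined via the Mahler measure of the primitive integer multiple of its
minimal polynomial over `ℚ` (value irrelevant for transcendental `x`). -/
noncomputable def weilHeight (x : ℂ) : ℝ :=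
  ((minpoly ℚ x).natDegree : ℝ)⁻¹ *
    Real.log
      (((IsLocalization.integerNormalization (nonZeroDivisors ℤ)
          (minpoly ℚ x)).primPart.leadingCoeff.natAbs : ℝ) *
        (((minpoly ℚ x).aroots ℂ).map (fun z => max 1 ‖z‖)).prod)

noncomputable def Complex.abs : AbsoluteValue ℂ ℝ := NormedField.toAbsoluteValue ℂ

lemma Complex.abs_apply (z : ℂ) : Complex.abs z = ‖z‖ := rfl

lemma Complex.abs_intCast (n : ℤ) : Complex.abs (n : ℂ) = |(n : ℝ)| := by
  rw [Complex.abs_apply, Complex.norm_intCast]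

lemma Complex.abs_natCast (n : ℕ) : Complex.abs (n : ℂ) = (n : ℝ) := by
  rw [Complex.abs_apply, Complex.norm_natCast]

lemma Complex.abs_ofReal (r : ℝ) : Complex.abs (r : ℂ) = |r| := by
  rw [Complex.abs_apply, Complex.norm_real, Real.norm_eq_abs]

lemma Complex.abs_I : Complex.abs Complex.I = 1 := by
  rw [Complex.abs_apply, Complex.norm_I]

lemma Complex.abs_im_le_abs (z : ℂ) : |z.im| ≤ Complex.abs z := by
  rw [Complex.abs_apply]; exact Complex.abs_im_le_norm z

namespace LBT


noncomputable abbrev intPoly (β : ℂ) : ℤ[X] :=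
  (IsLocalization.integerNormalization (nonZeroDivisors ℤ) (minpoly ℚ β)).primPart

noncomputable abbrev lead (β : ℂ) : ℕ := (intPoly β).leadingCoeff.natAbs

noncomputable abbrev rootProd (β : ℂ) : ℝ :=
  (((minpoly ℚ β).aroots ℂ).map (fun z => max 1 (Complex.abs z))).prod

lemma intPoly_ne_zero (β : ℂ) : intPoly β ≠ 0 := Polynomial.primPart_ne_zero _

lemma intNorm_ne_zero {β : ℂ} (hβ : IsAlgebraic ℚ β) :
    IsLocalization.integerNormalization (nonZeroDivisors ℤ) (minpoly ℚ β) ≠ 0 := by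
  intro h
  obtain ⟨b, hb⟩ := IsLocalization.integerNormalization_map_to_map (nonZeroDivisors ℤ)
    (minpoly ℚ β)
  rw [h, Polynomial.map_zero] at hb
  have hbq : (b : ℤ) ≠ 0 := nonZeroDivisors.coe_ne_zero b
  have := minpoly.ne_zero hβ.isIntegral
  apply this
  exact (smul_eq_zero.mp hb.symm).resolve_left hbq

lemma one_le_lead (β : ℂ) : 1 ≤ lead β :=
  Nat.one_le_iff_ne_zero.mpr (Int.natAbs_ne_zero.mpr
    (Polynomial.leadingCoeff_ne_zero.mpr (intPoly_ne_zero β)))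

lemma one_le_rootProd (β : ℂ) : (1 : ℝ) ≤ rootProd β := by
  apply Multiset.one_le_prod
  intro x hx
  simp only [Multiset.mem_map] at hx
  obtain ⟨z, _, rfl⟩ := hx
  exact le_max_left _ _

lemma rootProd_factor_le {β : ℂ} {z : ℂ} (hz : z ∈ (minpoly ℚ β).aroots ℂ) :
    max 1 (Complex.abs z) ≤ rootProd β := by
  have hmem : max 1 (Complex.abs z) ∈ ((minpoly ℚ β).aroots ℂ).map (fun z => max 1 (Complex.abs z)) :=
    Multiset.mem_map_of_mem _ hz
  obtain ⟨t, ht⟩ := Multiset.exists_cons_of_mem hmem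
  have h1 : (1:ℝ) ≤ t.prod := by
    apply Multiset.one_le_prod
    intro x hx
    have hx' : x ∈ ((minpoly ℚ β).aroots ℂ).map (fun z => max 1 (Complex.abs z)) := by
      rw [ht]; exact Multiset.mem_cons_of_mem hx
    simp only [Multiset.mem_map] at hx'
    obtain ⟨w, _, rfl⟩ := hx'
    exact le_max_left _ _
  have h0 : (0:ℝ) ≤ max 1 (Complex.abs z) := by positivity
  calc max 1 (Complex.abs z) = max 1 (Complex.abs z) * 1 := by ring
    _ ≤ max 1 (Complex.abs z) * t.prod := by nlinarith
    _ = rootProd β := by rw [rootProd, ht, Multiset.prod_cons]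

lemma exp_height {β : ℂ} (hβ : IsAlgebraic ℚ β) :
    Real.exp (((minpoly ℚ β).natDegree : ℝ) * weilHeight β) = (lead β : ℝ) * rootProd β := by
  have hd : 0 < (minpoly ℚ β).natDegree := minpoly.natDegree_pos hβ.isIntegral
  have hdr : ((minpoly ℚ β).natDegree : ℝ) ≠ 0 := by positivity
  have hpos : 0 < (lead β : ℝ) * rootProd β := by
    have h1 : (1:ℝ) ≤ (lead β : ℝ) := by exact_mod_cast one_le_lead β
    nlinarith [one_le_rootProd β]
  rw [weilHeight, ← mul_assoc, mul_inv_cancel₀ hdr, one_mul]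
  exact Real.exp_log hpos

lemma weilHeight_nonneg {β : ℂ} (hβ : IsAlgebraic ℚ β) : 0 ≤ weilHeight β := by
  have hd : 0 < (minpoly ℚ β).natDegree := minpoly.natDegree_pos hβ.isIntegral
  have h1 : (1:ℝ) ≤ (lead β : ℝ) * rootProd β := by
    have : (1:ℝ) ≤ (lead β : ℝ) := by exact_mod_cast one_le_lead β
    nlinarith [one_le_rootProd β]
  have hlog : 0 ≤ Real.log ((lead β : ℝ) * rootProd β) := Real.log_nonneg h1
  rw [weilHeight]
  positivity

lemma abs_root_le {β z : ℂ} (hβ : IsAlgebraic ℚ β) (hz : z ∈ (minpoly ℚ β).aroots ℂ) :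
    Complex.abs z ≤ Real.exp (((minpoly ℚ β).natDegree : ℝ) * weilHeight β) := by
  rw [exp_height hβ]
  calc Complex.abs z ≤ max 1 (Complex.abs z) := le_max_right _ _
    _ ≤ rootProd β := rootProd_factor_le hz
    _ ≤ (lead β : ℝ) * rootProd β := by
        have h1 : (1:ℝ) ≤ (lead β : ℝ) := by exact_mod_cast one_le_lead β
        nlinarith [one_le_rootProd β, (le_max_left 1 (Complex.abs z)).trans (rootProd_factor_le hz)]

lemma lead_le {β : ℂ} (hβ : IsAlgebraic ℚ β) :
    (lead β : ℝ) ≤ Real.exp (((minpoly ℚ β).natDegree : ℝ) * weilHeight β) := by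
  rw [exp_height hβ]
  have h1 : (0:ℝ) ≤ (lead β : ℝ) := by positivity
  nlinarith [one_le_rootProd β]

lemma aeval_intPoly_of_root {β z : ℂ} (hβ : IsAlgebraic ℚ β)
    (hz : Polynomial.aeval z (minpoly ℚ β) = 0) : Polynomial.aeval z (intPoly β) = 0 := by
  have h1 : Polynomial.aeval z (IsLocalization.integerNormalization (nonZeroDivisors ℤ)
      (minpoly ℚ β)) = 0 :=
    IsLocalization.integerNormalization_aeval_eq_zero (nonZeroDivisors ℤ) (minpoly ℚ β) hz
  exact Polynomial.aeval_primPart_eq_zero (intNorm_ne_zero hβ) h1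

lemma aeval_conj (β : ℂ) (p : ℚ[X]) :
    Polynomial.aeval ((starRingEnd ℂ) β) p = (starRingEnd ℂ) (Polynomial.aeval β p) := by
  have := Polynomial.aeval_algHom_apply ((Complex.conjAe.toAlgHom).restrictScalars ℚ) β p
  simpa using this

lemma conj_root {β : ℂ} (hβ : IsAlgebraic ℚ β) :
    Polynomial.aeval ((starRingEnd ℂ) β) (minpoly ℚ β) = 0 := by
  rw [aeval_conj, minpoly.aeval, map_zero]

lemma lead_mul_integral_of_root {β z : ℂ} (hβ : IsAlgebraic ℚ β)
    (hz : Polynomial.aeval z (minpoly ℚ β) = 0) : IsIntegral ℤ ((lead β : ℂ) * z) := by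
  have h0 := isIntegral_leadingCoeff_smul (intPoly β) z (aeval_intPoly_of_root hβ hz)
  have h0' : IsIntegral ℤ (((intPoly β).leadingCoeff : ℂ) * z) := by
    rwa [zsmul_eq_mul] at h0
  have key : ((lead β : ℂ)) = ((((intPoly β).leadingCoeff.natAbs : ℤ)) : ℂ) :=
    (Int.cast_natCast _).symm
  rcases Int.natAbs_eq (intPoly β).leadingCoeff with h | h
  · rw [key, ← h]; exact h0'
  · have h' : (((intPoly β).leadingCoeff.natAbs : ℤ)) = -(intPoly β).leadingCoeff := by omega
    rw [key, h']
    rw [show ((-(intPoly β).leadingCoeff : ℤ) : ℂ) * z = -(((intPoly β).leadingCoeff : ℂ) * z) by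
      push_cast; ring]
    exact h0'.neg



lemma abs_eval_le (p : ℂ[X]) (z : ℂ) (r : ℝ) (hr : 1 ≤ r) (hz : Complex.abs z ≤ r) :
    Complex.abs (p.eval z) ≤
      (∑ i ∈ Finset.range (p.natDegree+1), Complex.abs (p.coeff i)) * r ^ p.natDegree := by
  rw [Polynomial.eval_eq_sum_range]
  calc Complex.abs (∑ i ∈ Finset.range (p.natDegree+1), p.coeff i * z ^ i)
      ≤ ∑ i ∈ Finset.range (p.natDegree+1), Complex.abs (p.coeff i * z ^ i) :=
        Complex.abs.sum_le _ _
    _ ≤ ∑ i ∈ Finset.range (p.natDegree+1), Complex.abs (p.coeff i) * r ^ p.natDegree := by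
        apply Finset.sum_le_sum
        intro i hi
        rw [map_mul, map_pow]
        have h1 : Complex.abs z ^ i ≤ r ^ i := by
          apply pow_le_pow_left₀ (Complex.abs.nonneg z) hz
        have h2 : r ^ i ≤ r ^ p.natDegree := by
          apply pow_le_pow_right₀ hr
          simp only [Finset.mem_range] at hi
          omega
        have := Complex.abs.nonneg (p.coeff i)
        nlinarith [pow_nonneg (Complex.abs.nonneg z) i]
    _ = _ := by rw [← Finset.sum_mul]

lemma abs_pow_sub_pow (x y : ℂ) (r : ℝ) (hr : 1 ≤ r) (hx : Complex.abs x ≤ r)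
    (hy : Complex.abs y ≤ r) (i : ℕ) :
    Complex.abs (x ^ i - y ^ i) ≤ i * r ^ i * Complex.abs (x - y) := by
  have key := geom_sum₂_mul x y i
  rw [← key, map_mul]
  have hsum : Complex.abs (∑ k ∈ Finset.range i, x ^ k * y ^ (i - 1 - k)) ≤ i * r ^ i := by
    calc Complex.abs (∑ k ∈ Finset.range i, x ^ k * y ^ (i - 1 - k))
        ≤ ∑ k ∈ Finset.range i, Complex.abs (x ^ k * y ^ (i - 1 - k)) := Complex.abs.sum_le _ _
      _ ≤ ∑ _k ∈ Finset.range i, r ^ i := by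
          apply Finset.sum_le_sum
          intro k hk
          rw [map_mul, map_pow, map_pow]
          have h1 : Complex.abs x ^ k ≤ r ^ k := pow_le_pow_left₀ (Complex.abs.nonneg x) hx k
          have h2 : Complex.abs y ^ (i-1-k) ≤ r ^ (i-1-k) :=
            pow_le_pow_left₀ (Complex.abs.nonneg y) hy _
          have h3 : r ^ k * r ^ (i-1-k) = r ^ (k + (i-1-k)) := by rw [pow_add]
          have h4 : r ^ (k + (i-1-k)) ≤ r ^ i := by
            apply pow_le_pow_right₀ hr
            simp only [Finset.mem_range] at hk
            omega
          nlinarith [pow_nonneg (Complex.abs.nonneg x) k,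
            pow_nonneg (Complex.abs.nonneg y) (i-1-k),
            pow_nonneg (le_trans zero_le_one hr) k]
      _ = i * r ^ i := by rw [Finset.sum_const, Finset.card_range, nsmul_eq_mul]
  have h0 := Complex.abs.nonneg (x - y)
  nlinarith [Complex.abs.nonneg (∑ k ∈ Finset.range i, x ^ k * y ^ (i - 1 - k))]

lemma abs_eval_sub_eval (p : ℂ[X]) (x y : ℂ) (r : ℝ) (hr : 1 ≤ r) (hx : Complex.abs x ≤ r)
    (hy : Complex.abs y ≤ r) :
    Complex.abs (p.eval x - p.eval y) ≤
      ((∑ i ∈ Finset.range (p.natDegree+1), Complex.abs (p.coeff i)) *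
        ((p.natDegree+1) * r ^ p.natDegree)) * Complex.abs (x - y) := by
  rw [Polynomial.eval_eq_sum_range (p := p) x, Polynomial.eval_eq_sum_range (p := p) y,
    ← Finset.sum_sub_distrib]
  have key : ∀ i ∈ Finset.range (p.natDegree+1),
      Complex.abs (p.coeff i * x ^ i - p.coeff i * y ^ i) ≤
        Complex.abs (p.coeff i) * ((p.natDegree+1) * r ^ p.natDegree) * Complex.abs (x - y) := by
    intro i hi
    rw [← mul_sub, map_mul]
    have h1 := abs_pow_sub_pow x y r hr hx hy i
    have h2 : (i : ℝ) * r ^ i ≤ (p.natDegree+1) * r ^ p.natDegree := by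
      simp only [Finset.mem_range] at hi
      have h3 : r ^ i ≤ r ^ p.natDegree := pow_le_pow_right₀ hr (by omega)
      have h4 : (i:ℝ) ≤ (p.natDegree + 1 : ℕ) := by exact_mod_cast Nat.le_of_lt hi
      have h5 : (0:ℝ) ≤ r ^ i := pow_nonneg (le_trans zero_le_one hr) i
      push_cast at h4 ⊢
      nlinarith [pow_nonneg (le_trans zero_le_one hr) p.natDegree]
    have h6 := Complex.abs.nonneg (p.coeff i)
    have h7 := Complex.abs.nonneg (x - y)
    nlinarith [mul_le_mul_of_nonneg_left h1 h6,
      mul_le_mul_of_nonneg_left (mul_le_mul_of_nonneg_right h2 h7) h6]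
  calc Complex.abs (∑ i ∈ Finset.range (p.natDegree+1), (p.coeff i * x ^ i - p.coeff i * y ^ i))
      ≤ ∑ i ∈ Finset.range (p.natDegree+1),
          Complex.abs (p.coeff i * x ^ i - p.coeff i * y ^ i) := Complex.abs.sum_le _ _
    _ ≤ ∑ i ∈ Finset.range (p.natDegree+1),
          Complex.abs (p.coeff i) * ((p.natDegree+1) * r ^ p.natDegree) * Complex.abs (x - y) :=
        Finset.sum_le_sum key
    _ = _ := by rw [← Finset.sum_mul, ← Finset.sum_mul]

lemma isIntegral_aeval_int (q : ℤ[X]) {y : ℂ} (hy : IsIntegral ℤ y) :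
    IsIntegral ℤ (Polynomial.aeval y q) := by
  have : Polynomial.aeval y q =
      algebraMap (integralClosure ℤ ℂ) ℂ (Polynomial.aeval (⟨y, hy⟩ : integralClosure ℤ ℂ) q) := by
    have := Polynomial.aeval_algHom_apply (IsScalarTower.toAlgHom ℤ (integralClosure ℤ ℂ) ℂ)
      (⟨y, hy⟩ : integralClosure ℤ ℂ) q
    exact this
  rw [this]
  exact (Polynomial.aeval (⟨y, hy⟩ : integralClosure ℤ ℂ) q).2

lemma isIntegral_pow_mul_aeval (p : ℤ[X]) {x : ℂ} (c : ℤ) (h : IsIntegral ℤ ((c:ℂ) * x)) :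
    IsIntegral ℤ ((c:ℂ) ^ p.natDegree * Polynomial.aeval x p) := by
  have key := Polynomial.scaleRoots_eval₂_mul (Int.castRingHom ℂ) x c (p := p)
  have h2 : Polynomial.aeval ((c:ℂ) * x) (p.scaleRoots c) =
      (c:ℂ) ^ p.natDegree * Polynomial.aeval x p := by
    simpa [Polynomial.aeval_def] using key
  rw [← h2]
  exact isIntegral_aeval_int _ h

lemma one_le_prod_abs (K : IntermediateField ℚ ℂ) [FiniteDimensional ℚ K] (u : K)
    (hu : u ≠ 0) (hint : IsIntegral ℤ (u : ℂ)) :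
    1 ≤ ∏ ψ : (K →ₐ[ℚ] ℂ), Complex.abs (ψ u) := by
  have hintK : IsIntegral ℤ u := by
    rw [← isIntegral_algHom_iff (K.val.restrictScalars ℤ)
      (Subtype.coe_injective : Function.Injective (K.val.restrictScalars ℤ))]
    exact hint
  have hnorm_int : IsIntegral ℤ (Algebra.norm ℚ u) := Algebra.isIntegral_norm ℚ hintK
  obtain ⟨z, hz0⟩ := IsIntegrallyClosed.isIntegral_iff.mp hnorm_int
  have hz : ((z:ℚ)) = Algebra.norm ℚ u := by exact_mod_cast hz0
  have hnz : Algebra.norm ℚ u ≠ 0 := Algebra.norm_ne_zero_iff.mpr hu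
  have hzne : z ≠ 0 := by rintro rfl; exact hnz (by exact_mod_cast hz.symm)
  have hprod : ((Algebra.norm ℚ u : ℚ) : ℂ) = ∏ ψ : (K →ₐ[ℚ] ℂ), ψ u :=
    Algebra.norm_eq_prod_embeddings ℚ ℂ u
  have h1 : (1:ℝ) ≤ |(z:ℝ)| := by exact_mod_cast Int.one_le_abs hzne
  calc (1:ℝ) ≤ |(z:ℝ)| := h1
    _ = Complex.abs ((z:ℚ):ℂ) := by
        rw [show (((z:ℚ)):ℂ) = ((z:ℤ):ℂ) by push_cast; ring, Complex.abs_intCast]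
    _ = Complex.abs (∏ ψ : (K →ₐ[ℚ] ℂ), ψ u) := by rw [← hprod, ← hz]
    _ = ∏ ψ : (K →ₐ[ℚ] ℂ), Complex.abs (ψ u) := map_prod Complex.abs _ _



lemma exists_perm {α : Type*} [DecidableEq α] {a b c d : α} (hab : a ≠ b) (hcd : c ≠ d) :
    ∃ π : Equiv.Perm α, π a = c ∧ π b = d := by
  refine ⟨(Equiv.swap a c).trans (Equiv.swap ((Equiv.swap a c) b) d), ?_, ?_⟩
  · simp only [Equiv.trans_apply, Equiv.swap_apply_left]
    apply Equiv.swap_apply_of_ne_of_ne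
    · intro h
      apply hab
      exact ((Equiv.swap a c).injective (h.symm.trans (Equiv.swap_apply_left a c).symm)).symm
    · exact hcd
  · simp only [Equiv.trans_apply, Equiv.swap_apply_left]

lemma realize_perm (P : ℚ[X]) [Fact ((P.map (algebraMap ℚ ℂ)).Splits)]
    (hsurj : Function.Surjective (Polynomial.Gal.galActionHom P ℂ))
    (π : Equiv.Perm (P.rootSet P.SplittingField)) :
    ∃ σ : P.Gal, ∀ y : P.rootSet P.SplittingField,
      σ (y : P.SplittingField) = ((π y : P.rootSet P.SplittingField) : P.SplittingField) := by
  classical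
  obtain ⟨σ, hσ⟩ := hsurj ((Polynomial.Gal.rootsEquivRoots P ℂ).permCongr π)
  refine ⟨σ, fun y => ?_⟩
  have h1 : (Polynomial.Gal.galActionHom P ℂ σ) ((Polynomial.Gal.rootsEquivRoots P ℂ) y) =
      (Polynomial.Gal.rootsEquivRoots P ℂ) (π y) := by
    rw [hσ]
    exact congrArg (Polynomial.Gal.rootsEquivRoots P ℂ)
      (congrArg π ((Polynomial.Gal.rootsEquivRoots P ℂ).symm_apply_apply y))
  have h2 : σ • ((Polynomial.Gal.rootsEquivRoots P ℂ) y) =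
      (Polynomial.Gal.rootsEquivRoots P ℂ) (π y) := h1
  rw [Polynomial.Gal.smul_def] at h2
  replace h2 := (congrArg (fun w => (Polynomial.Gal.rootsEquivRoots P ℂ) (σ • w))
    ((Polynomial.Gal.rootsEquivRoots P ℂ).symm_apply_apply y).symm).trans h2
  have h3 : (σ • y : P.rootSet P.SplittingField) = π y :=
    (Polynomial.Gal.rootsEquivRoots P ℂ).injective h2
  have h4 : ((σ • y : P.rootSet P.SplittingField) : P.SplittingField) =
      σ (y : P.SplittingField) := rfl
  rw [← h3]
  exact h4.symm

lemma diff_eq_iff (P : ℚ[X]) [Fact ((P.map (algebraMap ℚ ℂ)).Splits)]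
    (hsurj : Function.Surjective (Polynomial.Gal.galActionHom P ℂ))
    (y z y' z' : P.rootSet P.SplittingField) (hyz : y ≠ z) (hyz' : y' ≠ z')
    (heq : (y : P.SplittingField) - (z : P.SplittingField)
      = (y' : P.SplittingField) - (z' : P.SplittingField)) :
    y = y' ∧ z = z' := by
  classical
  haveI : CharZero P.SplittingField :=
    charZero_of_injective_algebraMap (algebraMap ℚ P.SplittingField).injective
  have trans : ∀ (π : Equiv.Perm (P.rootSet P.SplittingField))
      (u v u' v' : P.rootSet P.SplittingField),
      (u : P.SplittingField) - v = (u' : P.SplittingField) - v' →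
      ((π u : P.rootSet P.SplittingField) : P.SplittingField) - (π v : P.rootSet P.SplittingField)
        = ((π u' : P.rootSet P.SplittingField) : P.SplittingField)
          - (π v' : P.rootSet P.SplittingField) := by
    intro π u v u' v' h
    obtain ⟨σ, hσ⟩ := realize_perm P hsurj π
    have h2 := congrArg σ h
    rw [map_sub, map_sub, hσ u, hσ v, hσ u', hσ v'] at h2
    exact h2
  have coe_inj : ∀ (u v : P.rootSet P.SplittingField),
      (u : P.SplittingField) = v → u = v := fun u v h => Subtype.coe_injective h
  by_cases h1 : y = y'
  · subst h1
    refine ⟨rfl, coe_inj _ _ ?_⟩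
    linear_combination -heq
  by_cases h2 : z = z'
  · subst h2
    exact absurd (coe_inj y y' (by linear_combination heq)) h1
  exfalso
  by_cases h3 : y = z'
  · by_cases h4 : z = y'
    · subst h3; subst h4
      have h5 : (2 : P.SplittingField) * ((y : P.SplittingField) - z) = 0 := by
        linear_combination heq
      have h6 : ((y : P.SplittingField) - (z : P.SplittingField)) = 0 := by
        rcases mul_eq_zero.mp h5 with h | h
        · norm_num at h
        · exact h
      exact hyz (coe_inj _ _ (by linear_combination h6))
    · subst h3
      have new := trans (Equiv.swap y y') y z y' y heq
      rw [Equiv.swap_apply_left, Equiv.swap_apply_right,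
        Equiv.swap_apply_of_ne_of_ne (Ne.symm hyz) h4] at new
      have h5 : (3 : P.SplittingField) * ((y : P.SplittingField) - y') = 0 := by
        linear_combination heq - new
      have h6 : ((y : P.SplittingField) - (y' : P.SplittingField)) = 0 := by
        rcases mul_eq_zero.mp h5 with h | h
        · norm_num at h
        · exact h
      exact h1 (coe_inj _ _ (by linear_combination h6))
  · by_cases h4 : z = y'
    · subst h4
      have new := trans (Equiv.swap z z') y z z z' heq
      rw [Equiv.swap_apply_left, Equiv.swap_apply_right,
        Equiv.swap_apply_of_ne_of_ne hyz h3] at new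
      have h5 : (3 : P.SplittingField) * ((z' : P.SplittingField) - z) = 0 := by
        linear_combination heq - new
      have h6 : ((z' : P.SplittingField) - (z : P.SplittingField)) = 0 := by
        rcases mul_eq_zero.mp h5 with h | h
        · norm_num at h
        · exact h
      exact h2 (coe_inj _ _ (by linear_combination -h6))
    · have new := trans (Equiv.swap y y') y z y' z' heq
      rw [Equiv.swap_apply_left, Equiv.swap_apply_right,
        Equiv.swap_apply_of_ne_of_ne (Ne.symm hyz) h4,
        Equiv.swap_apply_of_ne_of_ne (Ne.symm h3) (Ne.symm hyz')] at new
      have h5 : (2 : P.SplittingField) * ((y : P.SplittingField) - y') = 0 := by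
        linear_combination heq - new
      have h6 : ((y : P.SplittingField) - (y' : P.SplittingField)) = 0 := by
        rcases mul_eq_zero.mp h5 with h | h
        · norm_num at h
        · exact h
      exact h1 (coe_inj _ _ (by linear_combination h6))




lemma minpoly_diff_deg_ge (γ : ℂ) (hne : γ ≠ (starRingEnd ℂ) γ) (hγ : IsAlgebraic ℚ γ)
    [Fact ((minpoly ℚ γ).map (algebraMap ℚ ℂ)).Splits]
    (hconj : Polynomial.aeval ((starRingEnd ℂ) γ) (minpoly ℚ γ) = 0)
    (hsurj : Function.Surjective (Polynomial.Gal.galActionHom (minpoly ℚ γ) ℂ)) :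
    (minpoly ℚ γ).natDegree * (minpoly ℚ γ).natDegree - (minpoly ℚ γ).natDegree ≤
      (minpoly ℚ (γ - (starRingEnd ℂ) γ)).natDegree := by
  classical
  set P := minpoly ℚ γ with hP
  have hPne : P ≠ 0 := minpoly.ne_zero hγ.isIntegral
  have hγmem : γ ∈ P.rootSet ℂ := by
    rw [Polynomial.mem_rootSet]; exact ⟨hPne, minpoly.aeval ℚ γ⟩
  have hcmem : (starRingEnd ℂ) γ ∈ P.rootSet ℂ := by
    rw [Polynomial.mem_rootSet]; exact ⟨hPne, hconj⟩
  set e := Polynomial.Gal.rootsEquivRoots P ℂ with he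
  set f := IsScalarTower.toAlgHom ℚ P.SplittingField ℂ with hfdef
  have hf : Function.Injective f := f.toRingHom.injective
  set u := e.symm ⟨γ, hγmem⟩ with hu
  set v := e.symm ⟨(starRingEnd ℂ) γ, hcmem⟩ with hv
  have hcoe : ∀ y : P.rootSet P.SplittingField, f (y : P.SplittingField) = ((e y : P.rootSet ℂ) : ℂ) :=
    fun y => rfl
  have hfu : f (u : P.SplittingField) = γ := by
    rw [hcoe u, hu, e.apply_symm_apply]
  have hfv : f (v : P.SplittingField) = (starRingEnd ℂ) γ := by
    rw [hcoe v, hv, e.apply_symm_apply]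
  have huv : u ≠ v := by
    intro h
    apply hne
    have h2 := congrArg (fun w : P.rootSet P.SplittingField => f (w : P.SplittingField)) h
    change f (u : P.SplittingField) = f (v : P.SplittingField) at h2
    rw [hfu, hfv] at h2
    exact h2
  set tL : P.SplittingField := (u : P.SplittingField) - (v : P.SplittingField) with htL
  have hft : f tL = γ - (starRingEnd ℂ) γ := by rw [htL, map_sub, hfu, hfv]
  have ht_int : IsIntegral ℚ (γ - (starRingEnd ℂ) γ) :=
    hγ.isIntegral.sub (IsAlgebraic.isIntegral ⟨P, hPne, hconj⟩)
  set q := minpoly ℚ (γ - (starRingEnd ℂ) γ) with hqdef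
  have hq : q = minpoly ℚ tL := by rw [hqdef, ← hft, minpoly.algHom_eq f hf tL]
  have hqne : q ≠ 0 := minpoly.ne_zero ht_int
  have hroot : ∀ y z : P.rootSet P.SplittingField, y ≠ z →
      f ((y : P.SplittingField) - (z : P.SplittingField)) ∈ (q.aroots ℂ) := by
    intro y z hyz
    obtain ⟨π, hπu, hπv⟩ := exists_perm huv hyz
    obtain ⟨σ, hσ⟩ := realize_perm P hsurj π
    have h1 : Polynomial.aeval (σ tL) (minpoly ℚ tL) = 0 := by
      exact (Polynomial.aeval_algHom_apply σ tL (minpoly ℚ tL)).trans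
        (by rw [minpoly.aeval, map_zero])
    have h2 : σ tL = (y : P.SplittingField) - (z : P.SplittingField) := by
      rw [htL, map_sub, hσ u, hσ v]
      exact congrArg₂ (fun a b : P.rootSet P.SplittingField => (a : P.SplittingField) - b) hπu hπv
    rw [Polynomial.mem_aroots]
    refine ⟨hqne, ?_⟩
    have h3 : Polynomial.aeval ((y : P.SplittingField) - (z : P.SplittingField)) q = 0 := by
      rw [hq, ← h2]; exact h1
    rw [Polynomial.aeval_algHom_apply f _ q, h3, map_zero]
  set g : (P.rootSet P.SplittingField) × (P.rootSet P.SplittingField) → ℂ :=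
    fun w => f ((w.1 : P.SplittingField) - (w.2 : P.SplittingField)) with hg
  have hmaps : ∀ w ∈ (Finset.univ.offDiag :
      Finset ((P.rootSet P.SplittingField) × (P.rootSet P.SplittingField))),
      g w ∈ (q.aroots ℂ).toFinset := by
    intro w hw
    rw [Finset.mem_offDiag] at hw
    rw [Multiset.mem_toFinset]
    exact hroot w.1 w.2 hw.2.2
  have hinj : Set.InjOn g ((Finset.univ.offDiag :
      Finset ((P.rootSet P.SplittingField) × (P.rootSet P.SplittingField))) : Set _) := by
    intro w hw w' hw' hgw
    have hw1 := Finset.mem_offDiag.mp (Finset.mem_coe.mp hw)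
    have hw2 := Finset.mem_offDiag.mp (Finset.mem_coe.mp hw')
    have hsub : (w.1 : P.SplittingField) - (w.2 : P.SplittingField)
        = (w'.1 : P.SplittingField) - (w'.2 : P.SplittingField) := hf hgw
    obtain ⟨hfst, hsnd⟩ := diff_eq_iff P hsurj w.1 w.2 w'.1 w'.2 hw1.2.2 hw2.2.2 hsub
    exact Prod.ext hfst hsnd
  have hle := Finset.card_le_card_of_injOn g hmaps hinj
  have hcard : Fintype.card (P.rootSet P.SplittingField) = P.natDegree :=
    Polynomial.card_rootSet_eq_natDegree ((minpoly.irreducible hγ.isIntegral).separable)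
      (Polynomial.SplittingField.splits P)
  have hcard2 : (Finset.univ.offDiag :
      Finset ((P.rootSet P.SplittingField) × (P.rootSet P.SplittingField))).card
      = P.natDegree * P.natDegree - P.natDegree := by
    rw [Finset.offDiag_card, Finset.card_univ, hcard]
  have hcard3 : (q.aroots ℂ).toFinset.card ≤ q.natDegree := by
    calc (q.aroots ℂ).toFinset.card ≤ Multiset.card (q.aroots ℂ) := Multiset.toFinset_card_le _
      _ ≤ (q.map (algebraMap ℚ ℂ)).natDegree := Polynomial.card_roots' _
      _ = q.natDegree := Polynomial.natDegree_map _
  omega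



-- the compositum field
lemma fd_adjoin {β : ℂ} (hβ : IsAlgebraic ℚ β) (hc : IsAlgebraic ℚ ((starRingEnd ℂ) β)) :
    FiniteDimensional ℚ (IntermediateField.adjoin ℚ {β, (starRingEnd ℂ) β}) := by
  haveI : Finite ({β, (starRingEnd ℂ) β} : Set ℂ) :=
    Set.Finite.to_subtype ((Set.finite_singleton _).insert β)
  exact IntermediateField.finiteDimensional_adjoin (fun x hx => by
    rcases hx with h | h
    · rw [h]; exact hβ.isIntegral
    · rw [Set.mem_singleton_iff.mp h]; exact hc.isIntegral)

lemma minpoly_conj {β : ℂ} :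
    minpoly ℚ ((starRingEnd ℂ) β) = minpoly ℚ β := by
  have := minpoly.algHom_eq ((Complex.conjAe.toAlgHom).restrictScalars ℚ)
    (fun x y h => Complex.conjAe.injective h) β
  simpa using this

-- membership
lemma mem_adjoin_left (β : ℂ) : β ∈ IntermediateField.adjoin ℚ {β, (starRingEnd ℂ) β} :=
  IntermediateField.subset_adjoin ℚ _ (by simp)

lemma mem_adjoin_right (β : ℂ) :
    (starRingEnd ℂ) β ∈ IntermediateField.adjoin ℚ {β, (starRingEnd ℂ) β} :=
  IntermediateField.subset_adjoin ℚ _ (by simp)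

-- every embedding sends a generator to a root of its minpoly
lemma psi_root {K : IntermediateField ℚ ℂ} (ψ : K →ₐ[ℚ] ℂ) (x : K) :
    Polynomial.aeval (ψ x) (minpoly ℚ (x : ℂ)) = 0 := by
  have h1 : minpoly ℚ (x : ℂ) = minpoly ℚ x :=
    minpoly.algHom_eq K.val Subtype.coe_injective x
  rw [h1, Polynomial.aeval_algHom_apply ψ x (minpoly ℚ x), minpoly.aeval, map_zero]

lemma finrank_le {β : ℂ} (hβ : IsAlgebraic ℚ β)
    [FiniteDimensional ℚ (IntermediateField.adjoin ℚ {β, (starRingEnd ℂ) β})] :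
    Module.finrank ℚ (IntermediateField.adjoin ℚ {β, (starRingEnd ℂ) β}) ≤
      (minpoly ℚ β).natDegree * (minpoly ℚ β).natDegree := by
  classical
  set K := IntermediateField.adjoin ℚ {β, (starRingEnd ℂ) β} with hK
  have hPne : minpoly ℚ β ≠ 0 := minpoly.ne_zero hβ.isIntegral
  set s := ((minpoly ℚ β).aroots ℂ).toFinset with hs
  set Φ : (K →ₐ[ℚ] ℂ) → ℂ × ℂ :=
    fun ψ => (ψ ⟨β, mem_adjoin_left β⟩, ψ ⟨(starRingEnd ℂ) β, mem_adjoin_right β⟩) with hΦ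
  have hmaps : ∀ ψ ∈ (Finset.univ : Finset (K →ₐ[ℚ] ℂ)), Φ ψ ∈ s ×ˢ s := by
    intro ψ _
    rw [Finset.mem_product]
    constructor
    · rw [hs, Multiset.mem_toFinset, Polynomial.mem_aroots]
      exact ⟨hPne, psi_root ψ _⟩
    · rw [hs, Multiset.mem_toFinset, Polynomial.mem_aroots]
      refine ⟨hPne, ?_⟩
      have := psi_root ψ (⟨(starRingEnd ℂ) β, mem_adjoin_right β⟩ : K)
      rwa [show ((⟨(starRingEnd ℂ) β, mem_adjoin_right β⟩ : K) : ℂ) = (starRingEnd ℂ) β from rfl,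
        minpoly_conj] at this
  have hinj : Set.InjOn Φ ((Finset.univ : Finset (K →ₐ[ℚ] ℂ)) : Set _) := by
    intro ψ₁ _ ψ₂ _ h
    have h1 : ψ₁ ⟨β, mem_adjoin_left β⟩ = ψ₂ ⟨β, mem_adjoin_left β⟩ := congrArg Prod.fst h
    have h2 : ψ₁ ⟨(starRingEnd ℂ) β, mem_adjoin_right β⟩ =
        ψ₂ ⟨(starRingEnd ℂ) β, mem_adjoin_right β⟩ := congrArg Prod.snd h
    apply IntermediateField.adjoin_algHom_ext
    intro x hx
    rcases hx with h' | h'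
    · subst h'
      exact h1
    · rw [Set.mem_singleton_iff] at h'
      subst h'
      exact h2
  have hle := Finset.card_le_card_of_injOn Φ hmaps hinj
  have hcards : s.card ≤ (minpoly ℚ β).natDegree := by
    calc s.card ≤ Multiset.card ((minpoly ℚ β).aroots ℂ) := Multiset.toFinset_card_le _
      _ ≤ ((minpoly ℚ β).map (algebraMap ℚ ℂ)).natDegree := Polynomial.card_roots' _
      _ = (minpoly ℚ β).natDegree := Polynomial.natDegree_map _
  calc Module.finrank ℚ K = Fintype.card (K →ₐ[ℚ] ℂ) := (AlgHom.card ℚ K ℂ).symm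
    _ = (Finset.univ : Finset (K →ₐ[ℚ] ℂ)).card := Finset.card_univ.symm
    _ ≤ (s ×ˢ s).card := hle
    _ = s.card * s.card := Finset.card_product s s
    _ ≤ (minpoly ℚ β).natDegree * (minpoly ℚ β).natDegree := Nat.mul_le_mul hcards hcards

set_option maxHeartbeats 1000000 in
lemma liouville_core (K : IntermediateField ℚ ℂ) [FiniteDimensional ℚ K] (E : ℤ[X])
    (t : K) (a : ℕ) (ha : 1 ≤ a)
    (hint : IsIntegral ℤ ((a:ℂ) * (t:ℂ)))
    (hne : Polynomial.aeval ((t : ℂ)) E ≠ 0)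
    (R B : ℝ) (hR : 1 ≤ R) (haR : (a:ℝ) ≤ R) (hB1 : 1 ≤ B)
    (hroots : ∀ ψ : K →ₐ[ℚ] ℂ, Complex.abs (ψ t) ≤ R)
    (hBeval : ∀ z : ℂ, Complex.abs z ≤ R →
      Complex.abs (Polynomial.aeval z E) ≤ B * R ^ E.natDegree) :
    1 ≤ Complex.abs (Polynomial.aeval ((t : ℂ)) E) *
      (B * R ^ E.natDegree * R ^ E.natDegree) ^ (Module.finrank ℚ K) := by
  classical
  set n := E.natDegree with hn
  set D := Module.finrank ℚ K with hD
  set G := B * R ^ n * R ^ n with hG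
  have hR0 : (0:ℝ) ≤ R := le_trans zero_le_one hR
  have hRn : (1:ℝ) ≤ R ^ n := one_le_pow₀ hR
  have hB0 : (0:ℝ) ≤ B := by linarith
  have hBRn : (1:ℝ) ≤ B * R ^ n := by nlinarith
  have hG1 : (1:ℝ) ≤ G := by rw [hG]; nlinarith
  set u : K := ((a : K))^n * Polynomial.aeval t E with hu
  have hval : ∀ ψ : K →ₐ[ℚ] ℂ, ψ u = (a:ℂ)^n * Polynomial.aeval (ψ t) E := by
    intro ψ
    rw [hu, map_mul, map_pow, map_natCast]
    congr 1
    exact (Polynomial.aeval_algHom_apply (ψ.restrictScalars ℤ) t E).symm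
  have hcoe : (u : ℂ) = (a:ℂ)^n * Polynomial.aeval ((t:ℂ)) E := hval K.val
  have hu0 : u ≠ 0 := by
    intro h
    apply hne
    have h2 : (u : ℂ) = 0 := by rw [h]; exact ZeroMemClass.coe_zero K
    rw [hcoe] at h2
    have ha0 : (a:ℂ) ≠ 0 := Nat.cast_ne_zero.mpr (by omega)
    rcases mul_eq_zero.mp h2 with h3 | h3
    · exact absurd h3 (pow_ne_zero _ ha0)
    · exact h3
  have huint : IsIntegral ℤ (u : ℂ) := by
    rw [hcoe]
    have hcast : IsIntegral ℤ ((((a:ℕ):ℤ):ℂ) * (t:ℂ)) := by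
      rw [show ((((a:ℕ):ℤ):ℂ)) = ((a:ℕ):ℂ) by push_cast; ring]
      exact hint
    have := isIntegral_pow_mul_aeval E ((a:ℕ):ℤ) hcast
    rwa [show ((((a:ℕ):ℤ):ℂ)) = ((a:ℕ):ℂ) by push_cast; ring] at this
  have h1 := one_le_prod_abs K u hu0 huint
  have habs : ∀ ψ : K →ₐ[ℚ] ℂ,
      Complex.abs (ψ u) = (a:ℝ)^n * Complex.abs (Polynomial.aeval (ψ t) E) := by
    intro ψ
    rw [hval ψ, map_mul, map_pow, Complex.abs_natCast]
  have hboundψ : ∀ ψ : K →ₐ[ℚ] ℂ, Complex.abs (ψ u) ≤ G := by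
    intro ψ
    rw [habs ψ, hG]
    have h2 := hBeval (ψ t) (hroots ψ)
    have h3 : (a:ℝ)^n ≤ R^n := pow_le_pow_left₀ (Nat.cast_nonneg a) haR n
    have h4 : 0 ≤ Complex.abs (Polynomial.aeval (ψ t) E) := Complex.abs.nonneg _
    nlinarith [pow_nonneg hR0 n, pow_nonneg (show (0:ℝ) ≤ (a:ℝ) by positivity) n]
  set ψ₀ : K →ₐ[ℚ] ℂ := K.val with hψ₀
  have hsplit : ∏ ψ : K →ₐ[ℚ] ℂ, Complex.abs (ψ u)
      = Complex.abs (ψ₀ u) * ∏ ψ ∈ Finset.univ.erase ψ₀, Complex.abs (ψ u) :=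
    (Finset.mul_prod_erase Finset.univ _ (Finset.mem_univ ψ₀)).symm
  have hcarderase : (Finset.univ.erase ψ₀).card = D - 1 := by
    rw [Finset.card_erase_of_mem (Finset.mem_univ ψ₀), Finset.card_univ, AlgHom.card]
  have hD1 : 1 ≤ D := Module.finrank_pos
  have hprod2 : ∏ ψ ∈ Finset.univ.erase ψ₀, Complex.abs (ψ u) ≤ G ^ (D - 1) := by
    calc ∏ ψ ∈ Finset.univ.erase ψ₀, Complex.abs (ψ u)
        ≤ ∏ _ψ ∈ Finset.univ.erase ψ₀, G :=
          Finset.prod_le_prod (fun ψ _ => Complex.abs.nonneg _) (fun ψ _ => hboundψ ψ)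
      _ = G ^ (D - 1) := by rw [Finset.prod_const, hcarderase]
  have hψ₀u : Complex.abs (ψ₀ u) = (a:ℝ)^n * Complex.abs (Polynomial.aeval ((t:ℂ)) E) :=
    habs ψ₀
  have han : (a:ℝ)^n ≤ R^n := pow_le_pow_left₀ (Nat.cast_nonneg a) haR n
  have hRnG : R ^ n ≤ G := by rw [hG]; nlinarith [pow_nonneg hR0 n]
  have hGpow : G ^ (D-1) * G = G ^ D := by
    rw [← pow_succ]
    congr 1
    omega
  have h0 : 0 ≤ Complex.abs (Polynomial.aeval ((t:ℂ)) E) := Complex.abs.nonneg _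
  have hGpos : (0:ℝ) ≤ G ^ (D-1) := by positivity
  calc (1:ℝ) ≤ ∏ ψ : K →ₐ[ℚ] ℂ, Complex.abs (ψ u) := h1
    _ = ((a:ℝ)^n * Complex.abs (Polynomial.aeval ((t:ℂ)) E)) *
        ∏ ψ ∈ Finset.univ.erase ψ₀, Complex.abs (ψ u) := by rw [hsplit, hψ₀u]
    _ ≤ ((a:ℝ)^n * Complex.abs (Polynomial.aeval ((t:ℂ)) E)) * G ^ (D-1) := by
        apply mul_le_mul_of_nonneg_left hprod2 (by positivity)
    _ ≤ (R^n * Complex.abs (Polynomial.aeval ((t:ℂ)) E)) * G ^ (D-1) := by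
        apply mul_le_mul_of_nonneg_right _ hGpos
        exact mul_le_mul_of_nonneg_right han h0
    _ ≤ (G * Complex.abs (Polynomial.aeval ((t:ℂ)) E)) * G ^ (D-1) := by
        apply mul_le_mul_of_nonneg_right _ hGpos
        exact mul_le_mul_of_nonneg_right hRnG h0
    _ = Complex.abs (Polynomial.aeval ((t:ℂ)) E) * (G ^ (D-1) * G) := by ring
    _ = Complex.abs (Polynomial.aeval ((t:ℂ)) E) * G ^ D := by rw [hGpow]


lemma one_le_mul' {a b : ℝ} (ha : 1 ≤ a) (hb : 1 ≤ b) : 1 ≤ a * b := by nlinarith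

lemma final_step (Nm logA hh : ℝ) (h1 : 0 ≤ Nm) (h2 : 0 ≤ logA) (h3 : 0 ≤ hh) :
    -(Nm + logA + 1) * (hh + 1) ≤ -(logA + Nm * hh) := by
  nlinarith [mul_nonneg h2 h3, mul_nonneg h1 h3]

lemma nat_ineq {m : ℕ} (hm : 2 ≤ m) : (m-1)*(m-1) < m*m - m := by
  obtain ⟨k, rfl⟩ : ∃ k, m = k + 2 := ⟨m - 2, by omega⟩
  have h1 : (k+2)*(k+2) = (k+2) + (k*k + 3*k + 2) := by ring
  have h2 : (k+2-1)*(k+2-1) = k*k + 2*k + 1 := by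
    have h3 : k+2-1 = k+1 := by omega
    rw [h3]; ring
  rw [h1, h2, Nat.add_sub_cancel_left]
  have h4 := Nat.add_lt_add_left (show 2*k+1 < 3*k+2 by omega) (k*k)
  linarith

end LBT

open LBT in
set_option maxHeartbeats 2000000 in
/-- Let `γ` be a non-real algebraic number of degree `m` over `ℚ` whose Galois
group (acting on the conjugates of `γ`) is the full symmetric group. Then there
is `C > 0`, depending only on `γ`, such that for every algebraic `β` of degree
`< m` and every real `λ`, one has `|(λ + γ) - β| ≥ exp(-C (H(β) + 1))`. -/
theorem lower_bound_translate (γ : ℂ) (hγreal : γ.im ≠ 0) (hγ : IsAlgebraic ℚ γ)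
    (m : ℕ) (hdeg : (minpoly ℚ γ).natDegree = m)
    [Fact ((minpoly ℚ γ).map (algebraMap ℚ ℂ)).Splits]
    (hGal : Function.Bijective (Polynomial.Gal.galActionHom (minpoly ℚ γ) ℂ)) :
    ∃ C > (0 : ℝ), ∀ β : ℂ, IsAlgebraic ℚ β → (minpoly ℚ β).natDegree < m →
      ∀ lam : ℝ, Real.exp (-C * (weilHeight β + 1)) ≤
        ‖((lam : ℂ) + γ) - β‖ := by
  classical
  have hsurj : Function.Surjective (Polynomial.Gal.galActionHom (minpoly ℚ γ) ℂ) := hGal.2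
  have hint_γ : IsIntegral ℚ γ := hγ.isIntegral
  have hPne : minpoly ℚ γ ≠ 0 := minpoly.ne_zero hint_γ
  have hne : γ ≠ (starRingEnd ℂ) γ := by
    intro h
    exact hγreal (Complex.conj_eq_iff_im.mp h.symm)
  have hm1 : 1 ≤ m := hdeg ▸ minpoly.natDegree_pos hint_γ
  have hm2 : 2 ≤ m := by
    by_contra hcon
    have hm : (minpoly ℚ γ).natDegree = 1 := by omega
    have hγmem : γ ∈ Set.range (algebraMap ℚ ℂ) := minpoly.natDegree_eq_one_iff.mp hm
    obtain ⟨r, hr⟩ := hγmem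
    apply hγreal
    rw [← hr]
    simp
  have hconj : Polynomial.aeval ((starRingEnd ℂ) γ) (minpoly ℚ γ) = 0 := conj_root hγ
  set tγ : ℂ := γ - (starRingEnd ℂ) γ with htγ
  have ht_int : IsIntegral ℚ tγ :=
    hint_γ.sub (IsAlgebraic.isIntegral ⟨minpoly ℚ γ, hPne, hconj⟩)
  have hdegq : m*m - m ≤ (minpoly ℚ tγ).natDegree := by
    have := minpoly_diff_deg_ge γ hne hγ hconj hsurj
    rwa [hdeg] at this
  set q : ℚ[X] := minpoly ℚ tγ with hqdef
  have hqne : q ≠ 0 := minpoly.ne_zero ht_int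
  have hq_irr : Irreducible q := minpoly.irreducible ht_int
  have hq_monic : q.Monic := minpoly.monic ht_int
  set E : ℤ[X] := IsLocalization.integerNormalization (nonZeroDivisors ℤ) q with hEdef
  obtain ⟨b, hb⟩ := IsLocalization.integerNormalization_map_to_map (nonZeroDivisors ℤ) q
  rw [← hEdef] at hb
  have hbne : ((b : ℤ) : ℚ) ≠ 0 := by
    exact_mod_cast nonZeroDivisors.coe_ne_zero b
  have hE0 : E ≠ 0 := by
    intro hzero
    rw [hzero, Polynomial.map_zero] at hb
    apply hqne
    have h2 : ((b:ℤ):ℚ) • q = 0 := by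
      rw [Int.cast_smul_eq_zsmul ℚ]
      exact hb.symm
    exact (smul_eq_zero.mp h2).resolve_left hbne
  set n := E.natDegree with hndef
  have hn : n = q.natDegree := by
    have h1 : (E.map (algebraMap ℤ ℚ)).natDegree = n :=
      Polynomial.natDegree_map_eq_of_injective (fun x y hxy => Int.cast_injective hxy) E
    have h2 : ((b:ℤ) • q) = Polynomial.C ((b:ℤ):ℚ) * q := by
      rw [← Int.cast_smul_eq_zsmul ℚ, Polynomial.smul_eq_C_mul]
    rw [hb, h2, Polynomial.natDegree_C_mul hbne] at h1
    exact h1.symm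
  have hEt : Polynomial.aeval tγ E = 0 :=
    IsLocalization.integerNormalization_aeval_eq_zero (nonZeroDivisors ℤ) q (minpoly.aeval ℚ tγ)
  set Ec : ℂ[X] := E.map (Int.castRingHom ℂ) with hEcdef
  have hEc : ∀ z : ℂ, Ec.eval z = Polynomial.aeval z E := by
    intro z
    rw [hEcdef, Polynomial.eval_map, Polynomial.aeval_def]
    rfl
  have hEcdeg : Ec.natDegree = n :=
    Polynomial.natDegree_map_eq_of_injective (fun x y hxy => Int.cast_injective hxy) E
  set B : ℝ := ∑ i ∈ Finset.range (n+1), Complex.abs (Ec.coeff i) with hBdef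
  have hB1 : 1 ≤ B := by
    have hlc : E.coeff n ≠ 0 := by
      rw [hndef, Polynomial.coeff_natDegree]
      exact Polynomial.leadingCoeff_ne_zero.mpr hE0
    have h1 : (1:ℝ) ≤ Complex.abs (Ec.coeff n) := by
      rw [hEcdef, Polynomial.coeff_map]
      rw [show ((Int.castRingHom ℂ) (E.coeff n)) = ((E.coeff n : ℤ) : ℂ) from rfl,
        Complex.abs_intCast]
      exact_mod_cast Int.one_le_abs hlc
    calc (1:ℝ) ≤ Complex.abs (Ec.coeff n) := h1
      _ ≤ B := Finset.single_le_sum (fun i _ => Complex.abs.nonneg _)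
          (Finset.self_mem_range_succ n)
  set T : ℝ := Complex.abs tγ with hTdef
  have hT0 : 0 ≤ T := Complex.abs.nonneg _
  -- the constants
  set N : ℕ := n + 2*n*(m*m) with hNdef
  set A₀ : ℝ := (B*((n+1)*(2+T)^n)) * (B*(2^n)*(2^n))^(m*m) with hA₀def
  set A : ℝ := 2 * A₀ with hAdef
  have h2n : (1:ℝ) ≤ (2:ℝ)^n := one_le_pow₀ one_le_two
  have h2T : (1:ℝ) ≤ (2+T)^n := one_le_pow₀ (by linarith only [hT0])
  have hn1 : (1:ℝ) ≤ (n:ℝ)+1 := by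
    have hc := Nat.cast_nonneg (α := ℝ) n
    linarith only [hc]
  have hA₀1 : 1 ≤ A₀ := by
    have h4 := one_le_mul' hB1 (one_le_mul' hn1 h2T)
    have h5 : (1:ℝ) ≤ (B*(2^n)*(2^n))^(m*m) :=
      one_le_pow₀ (one_le_mul' (one_le_mul' hB1 h2n) h2n)
    exact one_le_mul' h4 h5
  have hA1 : 1 ≤ A := by rw [hAdef]; linarith only [hA₀1]
  have hA0 : 0 < A := by linarith only [hA1]
  have hlogA : 0 ≤ Real.log A := Real.log_nonneg hA1
  have hNm0' : (0:ℝ) ≤ (N:ℝ) * m := by positivity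
  refine ⟨(N:ℝ) * m + Real.log A + 1, by linarith only [hNm0', hlogA], ?_⟩
  intro β hβ hβdeg lam
  set d := (minpoly ℚ β).natDegree with hddef
  have hd1 : 1 ≤ d := minpoly.natDegree_pos hβ.isIntegral
  have hβne : minpoly ℚ β ≠ 0 := minpoly.ne_zero hβ.isIntegral
  set hh := weilHeight β with hhdef
  have hh0 : 0 ≤ hh := weilHeight_nonneg hβ
  set X : ℝ := Real.exp (m * hh) with hXdef
  have hX1 : 1 ≤ X := Real.one_le_exp (mul_nonneg (Nat.cast_nonneg m) hh0)
  have hXd : Real.exp (d * hh) ≤ X := by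
    apply Real.exp_le_exp.mpr
    have hdm' : (d:ℝ) ≤ (m:ℝ) := by exact_mod_cast le_of_lt hβdeg
    exact mul_le_mul_of_nonneg_right hdm' hh0
  have hβroot : Complex.abs β ≤ X := by
    refine le_trans (abs_root_le hβ ?_) hXd
    rw [Polynomial.mem_aroots]; exact ⟨hβne, minpoly.aeval ℚ β⟩
  have hconjβ_aev : Polynomial.aeval ((starRingEnd ℂ) β) (minpoly ℚ β) = 0 := conj_root hβ
  have hconjroot : Complex.abs ((starRingEnd ℂ) β) ≤ X := by
    refine le_trans (abs_root_le hβ ?_) hXd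
    rw [Polynomial.mem_aroots]; exact ⟨hβne, hconjβ_aev⟩
  set K := IntermediateField.adjoin ℚ {β, (starRingEnd ℂ) β} with hKdef
  haveI hKfd : FiniteDimensional ℚ K := fd_adjoin hβ ⟨minpoly ℚ β, hβne, hconjβ_aev⟩
  set tK : K := ⟨β, mem_adjoin_left β⟩ - ⟨(starRingEnd ℂ) β, mem_adjoin_right β⟩ with htK
  set tβ : ℂ := β - (starRingEnd ℂ) β with htβ
  have htKc : (tK : ℂ) = tβ := rfl
  have hDle : Module.finrank ℚ K ≤ d * d := finrank_le hβ
  have hdm : d ≤ m - 1 := by omega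
  -- Wilms-type non-vanishing
  have hWilms : Polynomial.aeval tβ E ≠ 0 := by
    intro h0
    have h1 : Polynomial.aeval tβ (E.map (algebraMap ℤ ℚ)) = 0 := by
      rw [Polynomial.aeval_map_algebraMap]; exact h0
    rw [hb] at h1
    have h2 : Polynomial.aeval tβ q = 0 := by
      have h3 : ((b:ℤ)) • Polynomial.aeval tβ q = 0 := by
        rw [← map_zsmul (Polynomial.aeval tβ : ℚ[X] →ₐ[ℚ] ℂ)]
        exact h1
      rw [zsmul_eq_mul] at h3
      have hbC : ((b:ℤ):ℂ) ≠ 0 := by exact_mod_cast nonZeroDivisors.coe_ne_zero b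
      exact (mul_eq_zero.mp h3).resolve_left hbC
    have h4 : q = minpoly ℚ tβ := minpoly.eq_of_irreducible_of_monic hq_irr h2 hq_monic
    have h5 : minpoly ℚ tβ = minpoly ℚ tK :=
      minpoly.algHom_eq K.val Subtype.coe_injective tK
    have h6 : (minpoly ℚ tK).natDegree ≤ Module.finrank ℚ K := minpoly.natDegree_le tK
    have h7 : q.natDegree ≤ d*d := by
      rw [h4, h5]
      exact le_trans h6 hDle
    have h8 : d*d ≤ (m-1)*(m-1) := Nat.mul_le_mul hdm hdm
    have h9 := nat_ineq hm2
    have hcontra : q.natDegree < q.natDegree :=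
      lt_of_lt_of_le (lt_of_le_of_lt (h7.trans h8) h9) hdegq
    exact lt_irrefl _ hcontra
  -- bounds for the conjugates of tK
  have haX : ((lead β : ℕ):ℝ) ≤ X := le_trans (lead_le hβ) hXd
  have habs_sub : ∀ x y : ℂ, Complex.abs (x - y) ≤ Complex.abs x + Complex.abs y := by
    intro x y
    have h4 := Complex.abs.add_le x (-y)
    rwa [← sub_eq_add_neg, AbsoluteValue.map_neg] at h4
  have hroots : ∀ ψ : K →ₐ[ℚ] ℂ, Complex.abs (ψ tK) ≤ 2*X := by
    intro ψ
    rw [htK, map_sub]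
    have h1 : Complex.abs (ψ ⟨β, mem_adjoin_left β⟩) ≤ X := by
      refine le_trans (abs_root_le hβ ?_) hXd
      rw [Polynomial.mem_aroots]
      exact ⟨hβne, psi_root ψ (⟨β, mem_adjoin_left β⟩ : K)⟩
    have h2 : Complex.abs (ψ ⟨(starRingEnd ℂ) β, mem_adjoin_right β⟩) ≤ X := by
      refine le_trans (abs_root_le hβ ?_) hXd
      rw [Polynomial.mem_aroots]
      refine ⟨hβne, ?_⟩
      have h3 := psi_root ψ (⟨(starRingEnd ℂ) β, mem_adjoin_right β⟩ : K)
      rwa [show (((⟨(starRingEnd ℂ) β, mem_adjoin_right β⟩ : K)) : ℂ)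
        = (starRingEnd ℂ) β from rfl, minpoly_conj] at h3
    exact le_trans (habs_sub _ _) (by linarith only [h1, h2])
  -- integrality
  have hintK : IsIntegral ℤ (((lead β : ℕ):ℂ) * ((tK : K) : ℂ)) := by
    rw [htKc, htβ, mul_sub]
    exact (lead_mul_integral_of_root hβ (minpoly.aeval ℚ β)).sub
      (lead_mul_integral_of_root hβ hconjβ_aev)
  have h2X1 : (1:ℝ) ≤ 2*X := by linarith only [hX1]
  have hBeval : ∀ z : ℂ, Complex.abs z ≤ 2*X →
      Complex.abs (Polynomial.aeval z E) ≤ B * (2*X)^n := by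
    intro z hz
    have h1 := abs_eval_le Ec z (2*X) h2X1 hz
    rw [hEcdeg] at h1
    rw [← hEc z]
    exact h1
  have hcore := liouville_core K E tK (lead β) (one_le_lead β) hintK
      (by rw [htKc]; exact hWilms) (2*X) B h2X1 (le_trans haX (by linarith only [hX1])) hB1
      hroots hBeval
  have hcore' : 1 ≤ Complex.abs (Polynomial.aeval tβ E) *
      (B*(2*X)^n*(2*X)^n)^(Module.finrank ℚ K) := by
    rw [← htKc]
    exact hcore
  -- Lipschitz estimate
  set r : ℝ := (2+T)*X with hrdef
  have hr1 : 1 ≤ r := one_le_mul' (by linarith only [hT0]) hX1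
  have htβbound : Complex.abs tβ ≤ r := by
    have h5 : Complex.abs tβ ≤ 2*X :=
      le_trans (habs_sub β _) (by linarith only [hβroot, hconjroot])
    have h6 : 2*X ≤ (2+T)*X :=
      mul_le_mul_of_nonneg_right (by linarith only [hT0]) (by linarith only [hX1])
    calc Complex.abs tβ ≤ 2*X := h5
      _ ≤ (2+T)*X := h6
  have htγbound : Complex.abs tγ ≤ r := by
    have h6 : (2+T)*1 ≤ (2+T)*X := mul_le_mul_of_nonneg_left hX1 (by linarith only [hT0])
    have h7 : Complex.abs tγ = T := hTdef.symm ▸ rfl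
    calc Complex.abs tγ = T := by rw [hTdef]
      _ ≤ (2+T)*1 := by linarith only []
      _ ≤ (2+T)*X := h6
  have hlip := abs_eval_sub_eval Ec tβ tγ r hr1 htβbound htγbound
  have hEtγ : Ec.eval tγ = 0 := by rw [hEc]; exact hEt
  rw [hEcdeg, hEtγ, sub_zero, hEc tβ] at hlip
  -- combine everything
  set D := Module.finrank ℚ K with hDdef
  have hG1 : (1:ℝ) ≤ B*(2*X)^n*(2*X)^n := by
    have h2Xn : (1:ℝ) ≤ (2*X)^n := one_le_pow₀ h2X1
    exact one_le_mul' (one_le_mul' hB1 h2Xn) h2Xn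
  have hDm : D ≤ m*m :=
    le_trans hDle (le_trans (Nat.mul_le_mul hdm hdm)
      (Nat.mul_le_mul (Nat.sub_le m 1) (Nat.sub_le m 1)))
  have hGD : (B*(2*X)^n*(2*X)^n)^D ≤ (B*(2*X)^n*(2*X)^n)^(m*m) :=
    pow_le_pow_right₀ hG1 hDm
  have habs0 : 0 ≤ Complex.abs (Polynomial.aeval tβ E) := Complex.abs.nonneg _
  have hsub0 : 0 ≤ Complex.abs (tβ - tγ) := Complex.abs.nonneg _
  have hr0 : (0:ℝ) ≤ r := by linarith only [hr1]
  have hB0 : (0:ℝ) ≤ B := by linarith only [hB1]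
  have hLpos : (0:ℝ) ≤ B * ((n+1) * r^n) :=
    mul_nonneg hB0 (mul_nonneg (by linarith only [hn1]) (pow_nonneg hr0 n))
  have hstep1 : 1 ≤ ((B * ((n+1) * r^n)) * Complex.abs (tβ - tγ)) *
      (B*(2*X)^n*(2*X)^n)^(m*m) := by
    calc (1:ℝ) ≤ Complex.abs (Polynomial.aeval tβ E) *
          (B*(2*X)^n*(2*X)^n)^D := hcore'
      _ ≤ ((B * ((n+1) * r^n)) * Complex.abs (tβ - tγ)) *
          (B*(2*X)^n*(2*X)^n)^D := by
          exact mul_le_mul_of_nonneg_right hlip (pow_nonneg (by linarith only [hG1]) D)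
      _ ≤ ((B * ((n+1) * r^n)) * Complex.abs (tβ - tγ)) *
          (B*(2*X)^n*(2*X)^n)^(m*m) := by
          exact mul_le_mul_of_nonneg_left hGD (mul_nonneg hLpos hsub0)
  have hident : ((B * ((n+1) * r^n)) * (B*(2*X)^n*(2*X)^n)^(m*m)) = A₀ * X^N := by
    rw [hA₀def, hNdef, hrdef]
    rw [mul_pow, mul_pow, mul_pow]
    ring
  have hstep2 : 1 ≤ (A₀ * X^N) * Complex.abs (tβ - tγ) := by
    calc (1:ℝ) ≤ ((B * ((n+1) * r^n)) * Complex.abs (tβ - tγ)) *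
          (B*(2*X)^n*(2*X)^n)^(m*m) := hstep1
      _ = ((B * ((n+1) * r^n)) * (B*(2*X)^n*(2*X)^n)^(m*m)) * Complex.abs (tβ - tγ) := by
          ring
      _ = (A₀ * X^N) * Complex.abs (tβ - tγ) := by rw [hident]
  -- relate to the distance
  have him : |γ.im - β.im| ≤ Complex.abs (((lam:ℂ) + γ) - β) := by
    have h11 : ((((lam:ℂ) + γ) - β).im) = γ.im - β.im := by simp
    have h12 := Complex.abs_im_le_abs (((lam:ℂ) + γ) - β)
    rwa [h11] at h12
  have htt : Complex.abs (tβ - tγ) = 2*|γ.im - β.im| := by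
    have h13 : tβ - tγ = -((γ - β) - (starRingEnd ℂ) (γ - β)) := by
      rw [htβ, htγ, map_sub]; ring
    rw [h13, AbsoluteValue.map_neg, Complex.sub_conj]
    rw [map_mul, Complex.abs_ofReal, Complex.abs_I, mul_one]
    rw [Complex.sub_im]
    rw [abs_mul]
    norm_num
  have hfinal : 1 ≤ (A * X^N) * Complex.abs (((lam:ℂ) + γ) - β) := by
    have h14 : Complex.abs (tβ - tγ) ≤ 2 * Complex.abs (((lam:ℂ) + γ) - β) := by
      rw [htt]; linarith only [him]
    have hXN : (0:ℝ) < X^N := pow_pos (by linarith only [hX1]) N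
    have hA₀0 : (0:ℝ) < A₀ := by linarith only [hA₀1]
    calc (1:ℝ) ≤ (A₀ * X^N) * Complex.abs (tβ - tγ) := hstep2
      _ ≤ (A₀ * X^N) * (2 * Complex.abs (((lam:ℂ) + γ) - β)) := by
          exact mul_le_mul_of_nonneg_left h14 (le_of_lt (mul_pos hA₀0 hXN))
      _ = (A * X^N) * Complex.abs (((lam:ℂ) + γ) - β) := by rw [hAdef]; ring
  -- conclude
  have hXNexp : X^N = Real.exp ((N:ℝ) * (m * hh)) := by
    rw [hXdef, ← Real.exp_nat_mul]
  have hPpos : (0:ℝ) < A * X^N := mul_pos hA0 (pow_pos (by linarith only [hX1]) N)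
  have hinv : (A * X^N)⁻¹ ≤ Complex.abs (((lam:ℂ) + γ) - β) := by
    have h15 := mul_le_mul_of_nonneg_left hfinal (le_of_lt (inv_pos.mpr hPpos))
    rwa [mul_one, ← mul_assoc, inv_mul_cancel₀ (ne_of_gt hPpos), one_mul] at h15
  refine le_trans ?_ hinv
  have hRHSeq : (A * X^N)⁻¹ = Real.exp (-(Real.log A + (N:ℝ)*((m:ℝ)*hh))) := by
    rw [hXNexp, Real.exp_neg, Real.exp_add, Real.exp_log hA0]
  rw [hRHSeq]
  apply Real.exp_le_exp.mpr
  rw [show ((N:ℝ)) * ((m:ℝ) * hh) = ((N:ℝ)*(m:ℝ)) * hh by ring]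
  exact final_step ((N:ℝ)*(m:ℝ)) (Real.log A) hh hNm0' hlogA hh0
end
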